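/- arXiv:1011.1966 — 5 statements merged into one kernel-verified Lean document; each statement's English description precedes it below -/
import Mathlib

section
/- For s ∈ (1/2, 1), A > 0, B ∈ ℝ, x₀ ∈ ℝ^N, the cusp function C(x) = A|x-x₀|^{2s-1} + B satisfies Δ^s_∞ C(x) = 0 for every x ≠ x₀; that is, writing v = (x-x₀)/|x-x₀| (the direction of ∇C(x)), the principal value integral ∫₀^∞ (C(x+ηv) + C(x-ηv) - 2C(x))/η^{1+2s} dη equals 0. -/
open MeasureTheory Metric Set Real

noncomputable section

namespace Stmt3Aux

open Filter Topology



lemma hasDerivAt_psi {p : ℝ} (hp : 0 < p) (t : ℝ) :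
    HasDerivAt (fun t : ℝ => t * |t| ^ p) ((p + 1) * |t| ^ p) t := by
  rcases lt_trichotomy t 0 with ht | rfl | ht
  · have h1 : HasDerivAt (fun y : ℝ => -((-y) ^ (p + 1))) ((p + 1) * (-t) ^ p) t := by
      have h2 : HasDerivAt (fun y : ℝ => (-y) ^ (p + 1)) ((p + 1) * (-t) ^ p * (-1)) t := by
        have h3 : HasDerivAt (fun u : ℝ => u ^ (p + 1)) ((p + 1) * (-t) ^ (p + 1 - 1)) (-t) :=
          Real.hasDerivAt_rpow_const (Or.inl (by linarith))
        simpa [add_sub_cancel_right, Function.comp_def] using h3.comp t (hasDerivAt_neg t)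
      simpa [Pi.neg_def] using h2.neg
    have heq : (fun y : ℝ => -((-y) ^ (p + 1))) =ᶠ[nhds t] fun y : ℝ => y * |y| ^ p := by
      filter_upwards [Iio_mem_nhds ht] with y hy
      rw [mem_Iio] at hy
      rw [abs_of_neg hy, Real.rpow_add (by linarith : (0:ℝ) < -y), Real.rpow_one]; ring
    have := h1.congr_of_eventuallyEq heq.symm
    simpa [abs_of_neg ht] using this
  · have h0 : ((p+1) * |(0:ℝ)| ^ p) = 0 := by
      simp [Real.zero_rpow (ne_of_gt hp)]
    rw [h0, hasDerivAt_iff_tendsto_slope]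
    have hs : (slope (fun t : ℝ => t * |t| ^ p) 0) =ᶠ[𝓝[≠] (0:ℝ)] fun h => |h| ^ p := by
      filter_upwards [self_mem_nhdsWithin] with y hy
      rw [mem_compl_iff, mem_singleton_iff] at hy
      rw [slope_def_field]; field_simp; simp; ring
    rw [tendsto_congr' hs]
    have hcont : ContinuousAt (fun h : ℝ => |h| ^ p) 0 := by
      exact ContinuousAt.comp (g := fun u : ℝ => u ^ p)
        (Real.continuousAt_rpow_const _ _ (Or.inr hp.le)) continuous_abs.continuousAt
    have := hcont.continuousWithinAt (s := {(0:ℝ)}ᶜ)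
    simpa [Real.zero_rpow (ne_of_gt hp)] using this.tendsto
  · have h1 : HasDerivAt (fun y : ℝ => y ^ (p + 1)) ((p + 1) * t ^ p) t := by
      have h3 : HasDerivAt (fun u : ℝ => u ^ (p + 1)) ((p + 1) * t ^ (p + 1 - 1)) t :=
        Real.hasDerivAt_rpow_const (Or.inl (ne_of_gt ht))
      simpa [add_sub_cancel_right] using h3
    have heq : (fun y : ℝ => y ^ (p + 1)) =ᶠ[nhds t] fun y : ℝ => y * |y| ^ p := by
      filter_upwards [Ioi_mem_nhds ht] with y hy
      rw [mem_Ioi] at hy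
      rw [abs_of_pos hy, Real.rpow_add hy, Real.rpow_one]; ring
    have := h1.congr_of_eventuallyEq heq.symm
    simpa [abs_of_pos ht] using this


lemma secondDiff_bound {q r : ℝ} (hq : 0 < q) (hq2 : q < 2) (hr : 0 < r) :
    ∃ C : ℝ, 0 ≤ C ∧ ∀ η ∈ Icc (0:ℝ) (r/2),
      |(r+η) ^ q + (r-η) ^ q - 2 * r ^ q| ≤ C * η ^ 2 := by
  set L : ℝ := |q * (q-1)| * (r/2) ^ (q-2) with hL
  have hL0 : 0 ≤ L := by positivity
  refine ⟨2 * L, by positivity, ?_⟩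
  intro η₀ hη₀
  obtain ⟨hη₀0, hη₀r⟩ := hη₀
  set G : ℝ → ℝ := fun t => q * t ^ (q-1) with hG
  set s : Set ℝ := Icc (r/2) (3*r/2) with hs
  -- MVT for G on s
  have hGlip : ∀ a ∈ s, ∀ b ∈ s, |G b - G a| ≤ L * |b - a| := by
    intro a ha b hb
    have hderiv : ∀ t ∈ s, HasDerivWithinAt G (q * ((q-1) * t ^ (q-2))) s t := by
      intro t ht
      have ht0 : (0:ℝ) < t := lt_of_lt_of_le (by positivity) ht.1
      have : HasDerivAt (fun u : ℝ => u ^ (q-1)) ((q-1) * t ^ (q-1-1)) t :=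
        Real.hasDerivAt_rpow_const (Or.inl (ne_of_gt ht0))
      have := (this.const_mul q).hasDerivWithinAt (s := s)
      simpa [hG, show q - 1 - 1 = q - 2 by ring] using this
    have hbound : ∀ t ∈ s, ‖q * ((q-1) * t ^ (q-2))‖ ≤ L := by
      intro t ht
      have ht0 : (0:ℝ) < r/2 := by positivity
      have h1 : t ^ (q-2) ≤ (r/2) ^ (q-2) :=
        Real.rpow_le_rpow_of_nonpos ht0 ht.1 (by linarith)
      have h2 : (0:ℝ) ≤ t ^ (q-2) := Real.rpow_nonneg (le_trans ht0.le ht.1) _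
      calc ‖q * ((q-1) * t ^ (q-2))‖ = |q * (q-1)| * t ^ (q-2) := by
            rw [Real.norm_eq_abs, ← mul_assoc, abs_mul, abs_of_nonneg h2]
        _ ≤ |q * (q-1)| * (r/2) ^ (q-2) := by
            exact mul_le_mul_of_nonneg_left h1 (abs_nonneg _)
        _ = L := rfl
    have := (convex_Icc _ _).norm_image_sub_le_of_norm_hasDerivWithin_le hderiv hbound ha hb
    simpa [Real.norm_eq_abs] using this
  -- now the second difference
  set H : ℝ → ℝ := fun η => (r+η) ^ q + (r-η) ^ q - 2 * r ^ q with hH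
  have hHval : H 0 = 0 := by simp [hH]; ring
  set s2 : Set ℝ := Icc (0:ℝ) η₀ with hs2
  have hHd : ∀ η ∈ s2, HasDerivWithinAt H (G (r+η) - G (r-η)) s2 η := by
    intro η hη
    have hη1 : 0 ≤ η := hη.1
    have hη2 : η ≤ r/2 := le_trans hη.2 hη₀r
    have hp1 : (0:ℝ) < r + η := by linarith
    have hp2 : (0:ℝ) < r - η := by linarith
    have d1 : HasDerivAt (fun η : ℝ => (r+η) ^ q) (q * (r+η) ^ (q-1)) η := by
      have h3 : HasDerivAt (fun u : ℝ => u ^ q) (q * (r+η) ^ (q-1)) (r+η) :=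
        Real.hasDerivAt_rpow_const (Or.inl (ne_of_gt hp1))
      simpa [Function.comp_def] using h3.comp η ((hasDerivAt_id η).const_add r)
    have d2 : HasDerivAt (fun η : ℝ => (r-η) ^ q) (-(q * (r-η) ^ (q-1))) η := by
      have h3 : HasDerivAt (fun u : ℝ => u ^ q) (q * (r-η) ^ (q-1)) (r-η) :=
        Real.hasDerivAt_rpow_const (Or.inl (ne_of_gt hp2))
      have := h3.comp η ((hasDerivAt_id η).neg.const_add r)
      simpa [mul_comm, Function.comp_def] using this
    have := ((d1.add d2).sub_const (2 * r ^ q)).hasDerivWithinAt (s := s2)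
    simpa [hH, hG, sub_eq_add_neg] using this
  have hHbound : ∀ η ∈ s2, ‖G (r+η) - G (r-η)‖ ≤ (2 * L) * η₀ := by
    intro η hη
    have hη1 : 0 ≤ η := hη.1
    have hη2 : η ≤ η₀ := hη.2
    have hη3 : η ≤ r/2 := le_trans hη2 hη₀r
    have hmem1 : r + η ∈ s := by rw [hs, mem_Icc]; constructor <;> nlinarith
    have hmem2 : r - η ∈ s := by rw [hs, mem_Icc]; constructor <;> nlinarith
    calc ‖G (r+η) - G (r-η)‖ = |G (r+η) - G (r-η)| := rfl
      _ ≤ L * |(r+η) - (r-η)| := hGlip _ hmem2 _ hmem1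
      _ = L * (2 * η) := by rw [show (r+η) - (r-η) = 2*η by ring, abs_of_nonneg (by linarith)]
      _ ≤ (2 * L) * η₀ := by nlinarith
  have := (convex_Icc _ _).norm_image_sub_le_of_norm_hasDerivWithin_le hHd hHbound
    (left_mem_Icc.2 hη₀0) (right_mem_Icc.2 hη₀0)
  rw [hHval, sub_zero, Real.norm_eq_abs] at this
  calc |H η₀| ≤ 2 * L * η₀ * |η₀ - 0| := this
    _ = 2 * L * η₀ ^ 2 := by rw [sub_zero, abs_of_nonneg hη₀0]; ring


lemma tendsto_Phi_atTop {p r : ℝ} (hp : 0 < p) (hr : 0 < r) :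
    Tendsto (fun η : ℝ => (2*r^(p+1) - (r+η)^(p+1) - (r-η)*|r-η|^p) / ((p+1)*r*η^(p+1)))
      atTop (𝓝 0) := by
  have t1 : Tendsto (fun η : ℝ => (η^(p+1))⁻¹) atTop (𝓝 0) :=
    (tendsto_rpow_atTop (by linarith)).inv_tendsto_atTop
  have trη : Tendsto (fun η : ℝ => r * η⁻¹) atTop (𝓝 0) := by
    simpa using tendsto_inv_atTop_zero.const_mul r
  have hc1 : ContinuousAt (fun u : ℝ => u ^ (p+1)) 1 :=
    Real.continuousAt_rpow_const _ _ (Or.inl one_ne_zero)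
  have t2 : Tendsto (fun η : ℝ => (1 + r*η⁻¹)^(p+1)) atTop (𝓝 1) := by
    have h : Tendsto (fun η : ℝ => 1 + r*η⁻¹) atTop (𝓝 1) := by
      simpa using tendsto_const_nhds.add trη
    simpa [Real.one_rpow, Function.comp_def] using hc1.tendsto.comp h
  have t3 : Tendsto (fun η : ℝ => (1 - r*η⁻¹)^(p+1)) atTop (𝓝 1) := by
    have h : Tendsto (fun η : ℝ => 1 - r*η⁻¹) atTop (𝓝 1) := by
      simpa using tendsto_const_nhds.sub trη
    simpa [Real.one_rpow, Function.comp_def] using hc1.tendsto.comp h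
  have tF : Tendsto (fun η : ℝ => (1/((p+1)*r)) *
      (2*r^(p+1) * (η^(p+1))⁻¹ - (1 + r*η⁻¹)^(p+1) + (1 - r*η⁻¹)^(p+1)))
      atTop (𝓝 ((1/((p+1)*r)) * (2*r^(p+1) * 0 - 1 + 1))) :=
    (((t1.const_mul _).sub t2).add t3).const_mul _
  rw [show ((1:ℝ)/((p+1)*r)) * (2*r^(p+1) * 0 - 1 + 1) = 0 by ring] at tF
  apply Filter.Tendsto.congr' _ tF
  filter_upwards [eventually_gt_atTop r, eventually_gt_atTop 0] with η h1 h2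
  have hηr : (0:ℝ) < η - r := by linarith
  have habs : |r - η| = η - r := by rw [abs_sub_comm, abs_of_pos hηr]
  have e5 : (r-η)*|r-η|^p = -((η-r)^(p+1)) := by
    rw [habs, Real.rpow_add hηr, Real.rpow_one]; ring
  have e6 : (1 + r*η⁻¹)^(p+1) = (r+η)^(p+1) / η^(p+1) := by
    rw [show (1 : ℝ) + r*η⁻¹ = (r+η)/η by field_simp; ring,
      Real.div_rpow (by linarith) h2.le]
  have e7 : (1 - r*η⁻¹)^(p+1) = (η-r)^(p+1) / η^(p+1) := by
    rw [show (1 : ℝ) - r*η⁻¹ = (η-r)/η by field_simp,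
      Real.div_rpow hηr.le h2.le]
  rw [e6, e7, e5]
  have hne : η^(p+1) ≠ 0 := by positivity
  field_simp
  ring


lemma tendsto_Phi_zero {p r : ℝ} (hp : 0 < p) (hp1 : p < 1) (hr : 0 < r) :
    Tendsto (fun η : ℝ => (2*r^(p+1) - (r+η)^(p+1) - (r-η)*|r-η|^p) / ((p+1)*r*η^(p+1)))
      (𝓝[Ici 0] 0) (𝓝 0) := by
  obtain ⟨C, hC0, hC⟩ := secondDiff_bound (q := p+1) (by linarith) (by linarith) hr
  set C' : ℝ := C / ((p+1)*r) with hC'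
  have hC'0 : 0 ≤ C' := by positivity
  have hmaj : Tendsto (fun η : ℝ => C' * η^(1-p)) (𝓝[Ici 0] 0) (𝓝 0) := by
    have hc : ContinuousAt (fun u : ℝ => u ^ (1-p)) 0 :=
      Real.continuousAt_rpow_const _ _ (Or.inr (by linarith))
    have h0 : Tendsto (fun η : ℝ => η^(1-p)) (𝓝[Ici 0] (0:ℝ)) (𝓝 ((0:ℝ)^(1-p))) :=
      hc.tendsto.mono_left nhdsWithin_le_nhds
    rw [Real.zero_rpow (show (1:ℝ)-p ≠ 0 by intro h; linarith)] at h0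
    simpa using h0.const_mul C'
  apply squeeze_zero_norm' _ hmaj
  filter_upwards [Icc_mem_nhdsGE_of_mem (show (0:ℝ) ∈ Ico 0 (r/2) by
    constructor <;> [rfl; positivity])] with η hη
  obtain ⟨hη0, hηr⟩ := hη
  rcases eq_or_lt_of_le hη0 with rfl | hη0'
  · have : ((0:ℝ))^(p+1) = 0 := Real.zero_rpow (by positivity)
    simp [this, Real.zero_rpow (show (1:ℝ)-p ≠ 0 by intro h; linarith)]
  · have hrη : (0:ℝ) < r - η := by linarith
    have habs : |r - η| = r - η := abs_of_pos hrη
    have e5 : (r-η)*|r-η|^p = (r-η)^(p+1) := by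
      rw [habs, Real.rpow_add hrη, Real.rpow_one]; ring
    have hden : (0:ℝ) < (p+1)*r*η^(p+1) := by positivity
    rw [Real.norm_eq_abs, e5, abs_div, abs_of_pos hden]
    have hnum : |2*r^(p+1) - (r+η)^(p+1) - (r-η)^(p+1)| ≤ C * η^2 := by
      have := hC η ⟨hη0, hηr⟩
      calc |2*r^(p+1) - (r+η)^(p+1) - (r-η)^(p+1)|
          = |(r+η)^(p+1) + (r-η)^(p+1) - 2*r^(p+1)| := by rw [abs_sub_comm]; ring_nf
        _ ≤ C * η^2 := this
    calc |2*r^(p+1) - (r+η)^(p+1) - (r-η)^(p+1)| / ((p+1)*r*η^(p+1))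
        ≤ (C * η^2) / ((p+1)*r*η^(p+1)) := by gcongr
      _ = C' * η^(1-p) := by
          rw [hC', show η^(2:ℕ) = η^(2:ℝ) from (Real.rpow_two η).symm,
            show η^((2:ℝ)) = η^(1-p) * η^(p+1) by
              rw [← Real.rpow_add hη0']; congr 1; ring]
          have hne : η^(p+1) ≠ 0 := by positivity
          field_simp




lemma hasDerivAt_Phi {p r : ℝ} (hp : 0 < p) (hr : 0 < r) {η : ℝ} (hη : 0 < η) :
    HasDerivAt (fun η : ℝ => (2*r^(p+1) - (r+η)^(p+1) - (r-η)*|r-η|^p) / ((p+1)*r*η^(p+1)))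
      (((r+η)^p + |r-η|^p - 2*r^p) / η^(p+2)) η := by
  have hrη : (0:ℝ) < r + η := by linarith
  have d1 : HasDerivAt (fun η : ℝ => (r+η)^(p+1)) ((p+1)*(r+η)^p) η := by
    have h3 : HasDerivAt (fun u : ℝ => u ^ (p+1)) ((p+1) * (r+η) ^ (p+1-1)) (r+η) :=
      Real.hasDerivAt_rpow_const (Or.inl (ne_of_gt hrη))
    simpa [add_sub_cancel_right, Function.comp_def] using h3.comp η ((hasDerivAt_id η).const_add r)
  have d2 : HasDerivAt (fun η : ℝ => (r-η)*|r-η|^p) (-((p+1)*|r-η|^p)) η := by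
    have := (hasDerivAt_psi hp (r-η)).comp η ((hasDerivAt_id η).neg.const_add r)
    simpa [mul_comm, Function.comp_def] using this
  have hnum : HasDerivAt (fun η : ℝ => 2*r^(p+1) - (r+η)^(p+1) - (r-η)*|r-η|^p)
      (-((p+1)*(r+η)^p) + (p+1)*|r-η|^p) η := by
    have := ((d1.const_sub (2*r^(p+1))).sub d2)
    exact this.congr_deriv (by ring)
  have hden : HasDerivAt (fun η : ℝ => (p+1)*r*η^(p+1)) ((p+1)*r*((p+1)*η^p)) η := by
    have h3 : HasDerivAt (fun u : ℝ => u ^ (p+1)) ((p+1) * η ^ (p+1-1)) η :=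
      Real.hasDerivAt_rpow_const (Or.inl (ne_of_gt hη))
    simpa [add_sub_cancel_right] using h3.const_mul ((p+1)*r)
  have hden_ne : (p+1)*r*η^(p+1) ≠ 0 := by positivity
  have := hnum.div hden hden_ne
  refine this.congr_deriv ?_
  have hEp : (0:ℝ) < η^p := Real.rpow_pos_of_pos hη _
  have e1 : (r+η)^(p+1) = (r+η)^p * (r+η) := by
    rw [Real.rpow_add hrη, Real.rpow_one]
  have e2 : r^(p+1) = r^p * r := by rw [Real.rpow_add hr, Real.rpow_one]
  have e3 : η^(p+1) = η^p * η := by rw [Real.rpow_add hη, Real.rpow_one]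
  have e4 : η^(p+2) = η^p * η^2 := by
    rw [Real.rpow_add hη, Real.rpow_two]
  rw [e1, e2, e3, e4]
  have h5 : η + (r - η) = r := by ring
  field_simp
  ring_nf



lemma integrableOn_g {p r : ℝ} (hp : 0 < p) (hp1 : p < 1) (hr : 0 < r) :
    IntegrableOn (fun η : ℝ => ((r+η)^p + |r-η|^p - 2*r^p) / η^(p+2)) (Ioi 0) := by
  set g : ℝ → ℝ := fun η => ((r+η)^p + |r-η|^p - 2*r^p) / η^(p+2) with hg
  have hg_cont : ContinuousOn g (Ioi 0) := by
    intro η hη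
    rw [mem_Ioi] at hη
    have h1 : ContinuousAt (fun η : ℝ => (r+η)^p) η :=
      (continuous_const.add continuous_id).continuousAt.rpow_const (Or.inr hp.le)
    have h2 : ContinuousAt (fun η : ℝ => |r-η|^p) η :=
      ((continuous_const.sub continuous_id).abs.continuousAt).rpow_const (Or.inr hp.le)
    have h3 : ContinuousAt (fun η : ℝ => η^(p+2)) η :=
      continuousAt_id.rpow_const (Or.inl (ne_of_gt hη))
    exact (((h1.add h2).sub continuousAt_const).div h3
      (ne_of_gt (Real.rpow_pos_of_pos hη _))).continuousWithinAt
  -- piece 1 : (0, r/2]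
  obtain ⟨C, hC0, hC⟩ := secondDiff_bound hp (by linarith) hr
  have i1 : IntegrableOn g (Ioc 0 (r/2)) := by
    have hmaj : IntegrableOn (fun η : ℝ => C * η^(-p)) (Ioc 0 (r/2)) := by
      have := (intervalIntegral.integrableOn_Ioo_rpow_iff (show (0:ℝ) < r/2 by positivity)).2
        (show (-1:ℝ) < -p by linarith)
      rw [integrableOn_Ioc_iff_integrableOn_Ioo]
      exact this.const_mul C
    apply Integrable.mono' hmaj
    · exact (hg_cont.mono (fun η hη => hη.1)).aestronglyMeasurable measurableSet_Ioc
    · filter_upwards [ae_restrict_mem measurableSet_Ioc] with η hη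
      obtain ⟨hη0, hηr⟩ := hη
      have hrη : (0:ℝ) < r - η := by linarith
      have habs : |r - η| = r - η := abs_of_pos hrη
      have hb := hC η ⟨hη0.le, hηr⟩
      rw [hg, Real.norm_eq_abs, abs_div, abs_of_pos (Real.rpow_pos_of_pos hη0 (p+2)), habs]
      calc |(r+η)^p + (r-η)^p - 2*r^p| / η^(p+2)
          ≤ (C * η^2) / η^(p+2) := by gcongr
        _ = C * η^(-p) := by
            rw [show η^(2:ℕ) = η^(2:ℝ) from (Real.rpow_two η).symm,
              show η^((2:ℝ)) = η^(-p) * η^(p+2) by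
                rw [← Real.rpow_add hη0]; congr 1; ring]
            have hne : η^(p+2) ≠ 0 := by positivity
            field_simp
  -- piece 2 : (r/2, 2r]
  have i2 : IntegrableOn g (Ioc (r/2) (2*r)) := by
    apply IntegrableOn.mono_set
      ((hg_cont.mono ?_).integrableOn_compact (isCompact_Icc (a := r/2) (b := 2*r)))
      Ioc_subset_Icc_self
    intro η hη
    exact lt_of_lt_of_le (by positivity) hη.1
  -- piece 3 : (2r, ∞)
  have i3 : IntegrableOn g (Ioi (2*r)) := by
    have hmaj : IntegrableOn (fun η : ℝ => 5 * η^(-2:ℝ)) (Ioi (2*r)) :=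
      ((integrableOn_Ioi_rpow_of_lt (by norm_num) (by positivity)).const_mul 5)
    apply Integrable.mono' hmaj
    · exact (hg_cont.mono (fun η hη => lt_trans (by positivity) hη)).aestronglyMeasurable
        measurableSet_Ioi
    · filter_upwards [ae_restrict_mem measurableSet_Ioi] with η hη
      rw [mem_Ioi] at hη
      have hη0 : (0:ℝ) < η := lt_trans (by positivity) hη
      have hηr : r < η := by linarith
      have habs : |r - η| = η - r := by rw [abs_sub_comm, abs_of_pos (by linarith)]
      rw [hg, Real.norm_eq_abs, abs_div, abs_of_pos (Real.rpow_pos_of_pos hη0 (p+2)), habs]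
      have hb1 : (r+η)^p ≤ 2 * η^p := by
        calc (r+η)^p ≤ (2*η)^p := by
              apply Real.rpow_le_rpow (by linarith) (by linarith) hp.le
          _ = 2^p * η^p := Real.mul_rpow (by norm_num) hη0.le
          _ ≤ 2 * η^p := by
              have h2p : (2:ℝ)^p ≤ 2^(1:ℝ) :=
                Real.rpow_le_rpow_of_exponent_le (by norm_num) (by linarith)
              rw [Real.rpow_one] at h2p
              exact mul_le_mul_of_nonneg_right h2p (Real.rpow_nonneg hη0.le _)
      have hb2 : (η-r)^p ≤ η^p := Real.rpow_le_rpow (by linarith) (by linarith) hp.le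
      have hb3 : r^p ≤ η^p := Real.rpow_le_rpow hr.le hηr.le hp.le
      have hnum : |(r+η)^p + (η-r)^p - 2*r^p| ≤ 5 * η^p := by
        rw [abs_le]
        constructor
        · have h4 : (0:ℝ) ≤ (r+η)^p := Real.rpow_nonneg (by linarith) _
          have h5 : (0:ℝ) ≤ (η-r)^p := Real.rpow_nonneg (by linarith) _
          have h6 : (0:ℝ) ≤ η^p := Real.rpow_nonneg hη0.le _
          nlinarith
        · have h6 : (0:ℝ) ≤ r^p := Real.rpow_nonneg hr.le _
          nlinarith
      calc |(r+η)^p + (η-r)^p - 2*r^p| / η^(p+2)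
          ≤ (5 * η^p) / η^(p+2) := by gcongr
        _ = 5 * η^(-2:ℝ) := by
            rw [show η^(p:ℝ) = η^(-2:ℝ) * η^(p+2) by
                rw [← Real.rpow_add hη0]; congr 1; ring]
            have hne : η^(p+2) ≠ 0 := by positivity
            field_simp
  -- combine
  have hunion : Ioi (0:ℝ) = Ioc 0 (r/2) ∪ (Ioc (r/2) (2*r) ∪ Ioi (2*r)) := by
    rw [Ioc_union_Ioi_eq_Ioi (by linarith), Ioc_union_Ioi_eq_Ioi (by positivity)]
  rw [hunion]
  exact i1.union (i2.union i3)


lemma integral_g_eq_zero {p r : ℝ} (hp : 0 < p) (hp1 : p < 1) (hr : 0 < r) :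
    ∫ η in Ioi (0:ℝ), ((r+η)^p + |r-η|^p - 2*r^p) / η^(p+2) = 0 := by
  set Φ : ℝ → ℝ :=
    fun η => (2*r^(p+1) - (r+η)^(p+1) - (r-η)*|r-η|^p) / ((p+1)*r*η^(p+1)) with hΦ
  have hΦ0 : Φ 0 = 0 := by
    simp [hΦ, Real.zero_rpow (show p+1 ≠ 0 by positivity)]
  have hcont : ContinuousWithinAt Φ (Ici 0) 0 := by
    rw [ContinuousWithinAt, hΦ0]
    exact tendsto_Phi_zero hp hp1 hr
  have hkey := integral_Ioi_of_hasDerivAt_of_tendsto (a := 0) (m := 0) hcont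
    (fun η hη => hasDerivAt_Phi hp hr (mem_Ioi.1 hη)) (integrableOn_g hp hp1 hr)
    (tendsto_Phi_atTop hp hr)
  rw [hkey, hΦ0, sub_zero]

end Stmt3Aux

/-- the cusp `C(x) = A|x-x₀|^{2s-1} + B` satisfies `Δ^s_∞ C(x) = 0`
for every `x ≠ x₀`, i.e. the second-difference integral in the direction of the
gradient `v = (x - x₀)/|x - x₀|` vanishes. -/
theorem stmt_3 {N : ℕ} (s : ℝ) (hs : 1 / 2 < s) (hs1 : s < 1)
    (A B : ℝ) (hA : 0 < A) (x₀ x : EuclideanSpace ℝ (Fin N)) (hx : x ≠ x₀) :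
    (∫ η in Set.Ioi (0 : ℝ),
      ((fun z => A * ‖z - x₀‖ ^ (2 * s - 1) + B) (x + η • (‖x - x₀‖⁻¹ • (x - x₀)))
        + (fun z => A * ‖z - x₀‖ ^ (2 * s - 1) + B) (x - η • (‖x - x₀‖⁻¹ • (x - x₀)))
        - 2 * ((fun z => A * ‖z - x₀‖ ^ (2 * s - 1) + B) x)) / η ^ (1 + 2 * s)) = 0 := by
  set p : ℝ := 2 * s - 1 with hp_def
  have hp : 0 < p := by rw [hp_def]; linarith
  have hp1 : p < 1 := by rw [hp_def]; linarith
  set r : ℝ := ‖x - x₀‖ with hr_def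
  have hr : 0 < r := by
    rw [hr_def, norm_pos_iff]
    exact sub_ne_zero.2 hx
  have key : EqOn
      (fun η : ℝ =>
        ((fun z => A * ‖z - x₀‖ ^ p + B) (x + η • (r⁻¹ • (x - x₀)))
          + (fun z => A * ‖z - x₀‖ ^ p + B) (x - η • (r⁻¹ • (x - x₀)))
          - 2 * ((fun z => A * ‖z - x₀‖ ^ p + B) x)) / η ^ (1 + 2 * s))
      (fun η : ℝ => A * (((r+η)^p + |r-η|^p - 2*r^p) / η^(p+2)))
      (Ioi 0) := by
    intro η hη
    rw [mem_Ioi] at hη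
    simp only
    have hn1 : ‖x + η • (r⁻¹ • (x - x₀)) - x₀‖ = r + η := by
      have hv : x + η • (r⁻¹ • (x - x₀)) - x₀ = (1 + η * r⁻¹) • (x - x₀) := by
        rw [smul_smul, add_smul, one_smul]
        abel
      rw [hv, norm_smul, Real.norm_eq_abs, ← hr_def,
        abs_of_pos (show (0:ℝ) < 1 + η * r⁻¹ by positivity)]
      field_simp
    have hn2 : ‖x - η • (r⁻¹ • (x - x₀)) - x₀‖ = |r - η| := by
      have hv : x - η • (r⁻¹ • (x - x₀)) - x₀ = ((r - η) * r⁻¹) • (x - x₀) := by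
        rw [smul_smul, sub_mul, mul_inv_cancel₀ (ne_of_gt hr), sub_smul, one_smul]
        abel
      rw [hv, norm_smul, Real.norm_eq_abs, ← hr_def, abs_mul, abs_inv,
        abs_of_pos hr]
      field_simp
    rw [hn1, hn2, show x - x₀ = x - x₀ from rfl, ← hr_def,
      show (1 + 2*s : ℝ) = p + 2 by rw [hp_def]; ring]
    ring
  rw [setIntegral_congr_fun measurableSet_Ioi key, MeasureTheory.integral_const_mul,
    Stmt3Aux.integral_g_eq_zero hp hp1 hr, mul_zero]
end
end

section
/- For s ∈ (1/2, 1), the one-dimensional function g(η) = (max(η,0))^s satisfies the s-fractional harmonic equation on the positive half-line: for every t > 0, the principal value integral ∫_{-∞}^∞ (g(t+τ) - g(t))/|τ|^{1+2s} dτ = 0. -/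
open MeasureTheory Metric Set Real Filter Topology

noncomputable section

namespace Stmt4

def Fi (s t τ : ℝ) : ℝ :=
  ((fun η : ℝ => if 0 ≤ η then η ^ s else 0) (t + τ)
    - (fun η : ℝ => if 0 ≤ η then η ^ s else 0) t) / |τ| ^ (1 + 2 * s)

def f1 (s t τ : ℝ) : ℝ := ((t + τ) ^ s - t ^ s) / τ ^ (1 + 2 * s)

def fq (s t τ : ℝ) : ℝ :=
  (t * (t + τ) ^ (s - 1) - t ^ (1 - s) * (t + τ) ^ (2 * s - 1)) / τ ^ (1 + 2 * s)

def f2 (s t u : ℝ) : ℝ := ((t - u) ^ s - t ^ s) / u ^ (1 + 2 * s)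

def Hh (s t τ : ℝ) : ℝ := ((t + τ) ^ s - t ^ s) ^ 2 / (2 * s * t ^ s * τ ^ (2 * s))

def phi (t τ : ℝ) : ℝ := t * τ / (t + τ)

variable {s t ε τ : ℝ}

lemma rpow_subadd {x y p : ℝ} (hx : 0 ≤ x) (hy : 0 ≤ y) (hp : 0 ≤ p) (hp1 : p ≤ 1) :
    (x + y) ^ p ≤ x ^ p + y ^ p := by
  have h := NNReal.coe_le_coe.2 (NNReal.rpow_add_le_add_rpow x.toNNReal y.toNNReal hp hp1)
  push_cast at h
  simpa [Real.coe_toNNReal x hx, Real.coe_toNNReal y hy] using h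

lemma integrableOn_comp_neg {f : ℝ → ℝ} {a : ℝ}
    (h : IntegrableOn (fun x => f (-x)) (Ioi a)) : IntegrableOn f (Iio (-a)) := by
  have h' : Integrable (Set.indicator (Ioi a) fun x => f (-x)) :=
    (integrable_indicator_iff measurableSet_Ioi).2 h
  have h2 := h'.comp_neg
  have key : (fun x => Set.indicator (Ioi a) (fun y => f (-y)) (-x)) =
      Set.indicator (Iio (-a)) f := by
    funext x
    by_cases hx : x < -a
    · rw [Set.indicator_of_mem (by simp only [mem_Ioi]; linarith : -x ∈ Ioi a),
        Set.indicator_of_mem (by simpa using hx), neg_neg]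
    · push_neg at hx
      rw [Set.indicator_of_notMem (by simp only [mem_Ioi]; push_neg; linarith),
        Set.indicator_of_notMem (by simpa using hx)]
  rw [key] at h2
  exact (integrable_indicator_iff measurableSet_Iio).1 h2

lemma integrableOn_aux (ht : 0 < t) {a b : ℝ} (hε : 0 < ε) (hab : a + b < -1) :
    IntegrableOn (fun τ : ℝ => (t + τ) ^ a * τ ^ b) (Ioi ε) := by
  have hcont : ContinuousOn (fun τ : ℝ => (t + τ) ^ a * τ ^ b) (Ioi ε) := by
    apply ContinuousOn.mul
    · exact (continuousOn_const.add (continuousOn_id)).rpow_const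
        (fun x hx => Or.inl (by have h1 : (0:ℝ) < x := hε.trans hx; have := ht; show t + x ≠ 0; positivity))
    · exact continuousOn_id.rpow_const
        (fun x hx => Or.inl (ne_of_gt (hε.trans hx)))
  have key : ∃ C : ℝ, 0 ≤ C ∧ ∀ τ ∈ Ioi ε, (t + τ) ^ a ≤ C * τ ^ a := by
    rcases le_or_gt 0 a with ha | ha
    · refine ⟨(t / ε + 1) ^ a, by positivity, fun τ hτ => ?_⟩
      have hτ' : 0 < τ := hε.trans hτ
      have h1 : t + τ ≤ (t / ε + 1) * τ := by
        rw [add_mul, one_mul, div_mul_eq_mul_div]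
        have h2 : t ≤ t * τ / ε := by
          rw [le_div_iff₀ hε]
          nlinarith [le_of_lt (show ε < τ from hτ)]
        linarith
      calc (t + τ) ^ a ≤ ((t / ε + 1) * τ) ^ a :=
            Real.rpow_le_rpow (by positivity) h1 ha
        _ = (t / ε + 1) ^ a * τ ^ a := Real.mul_rpow (by positivity) hτ'.le
    · refine ⟨1, zero_le_one, fun τ hτ => ?_⟩
      have hτ' : 0 < τ := hε.trans hτ
      rw [one_mul]
      exact Real.rpow_le_rpow_of_nonpos hτ' (by linarith [mem_Ioi.1 hτ]) ha.le
  obtain ⟨C, hC0, hC⟩ := key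
  refine ((integrableOn_Ioi_rpow_of_lt hab hε).const_mul C).mono'
    (hcont.aestronglyMeasurable measurableSet_Ioi) ?_
  filter_upwards [ae_restrict_mem measurableSet_Ioi] with τ hτ
  have hτ' : 0 < τ := hε.trans hτ
  have hPn : (0:ℝ) ≤ t + τ := by linarith
  have hle : (t + τ) ^ a * τ ^ b ≤ C * τ ^ (a + b) := by
    rw [Real.rpow_add hτ', ← mul_assoc]
    exact mul_le_mul_of_nonneg_right (hC τ hτ) (Real.rpow_nonneg hτ'.le b)
  rw [Real.norm_eq_abs, abs_of_nonneg (mul_nonneg (Real.rpow_nonneg hPn a)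
    (Real.rpow_nonneg hτ'.le b))]
  exact hle

lemma integrableOn_f1 (ht : 0 < t) (hs : 1 / 2 < s) (hε : 0 < ε) :
    IntegrableOn (f1 s t) (Ioi ε) := by
  have h1 := integrableOn_aux (t := t) ht hε (a := s) (b := -(1 + 2 * s)) (by linarith)
  have h2 : IntegrableOn (fun τ : ℝ => t ^ s * τ ^ (-(1 + 2 * s))) (Ioi ε) :=
    (integrableOn_Ioi_rpow_of_lt (by linarith) hε).const_mul _
  refine IntegrableOn.congr_fun (h1.sub h2) (fun τ hτ => ?_) measurableSet_Ioi
  have hτ' : 0 < τ := hε.trans hτ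
  simp only [f1, Pi.sub_apply]
  rw [Real.rpow_neg hτ'.le, div_eq_mul_inv, sub_mul]

lemma integrableOn_fq (ht : 0 < t) (hs : 1 / 2 < s) (hs1 : s < 1) (hε : 0 < ε) :
    IntegrableOn (fq s t) (Ioi ε) := by
  have h1 := (integrableOn_aux (t := t) ht hε (a := s - 1) (b := -(1 + 2 * s))
    (by linarith)).const_mul t
  have h2 := (integrableOn_aux (t := t) ht hε (a := 2 * s - 1) (b := -(1 + 2 * s))
    (by linarith)).const_mul (t ^ (1 - s))
  refine IntegrableOn.congr_fun (h1.sub h2) (fun τ hτ => ?_) measurableSet_Ioi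
  have hτ' : 0 < τ := hε.trans hτ
  simp only [fq, Pi.sub_apply]
  rw [Real.rpow_neg hτ'.le, div_eq_mul_inv]
  ring

lemma integrableOn_f2 (hs0 : 0 ≤ s) (hε : 0 < ε) :
    IntegrableOn (f2 s t) (Ioc ε t) := by
  have hcont : ContinuousOn (f2 s t) (Icc ε t) := by
    apply ContinuousOn.div
    · exact ((continuousOn_const.sub continuousOn_id).rpow_const
        (fun x hx => Or.inr hs0)).sub continuousOn_const
    · exact continuousOn_id.rpow_const
        (fun x hx => Or.inl (ne_of_gt (lt_of_lt_of_le hε hx.1)))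
    · exact fun x hx => ne_of_gt (Real.rpow_pos_of_pos (lt_of_lt_of_le hε hx.1) _)
  exact hcont.integrableOn_Icc.mono_set Ioc_subset_Icc_self

lemma hasDerivAt_Hh (hs : 1 / 2 < s) (ht : 0 < t) (hτ : 0 < τ) :
    HasDerivAt (Hh s t) (f1 s t τ + fq s t τ) τ := by
  have hs0 : (0:ℝ) < s := by linarith
  have hP : 0 < t + τ := by linarith
  have hA : HasDerivAt (fun x : ℝ => (t + x) ^ s) (s * (t + τ) ^ (s - 1)) τ := by
    have h0 : HasDerivAt (fun x : ℝ => t + x) 1 τ := (hasDerivAt_id τ).const_add t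
    have h1 : HasDerivAt (fun y : ℝ => y ^ s) (s * (t + τ) ^ (s - 1)) (t + τ) :=
      Real.hasDerivAt_rpow_const (Or.inl hP.ne')
    have := h1.comp τ h0; rw [mul_one] at this; exact this
  have hN : HasDerivAt (fun x : ℝ => ((t + x) ^ s - t ^ s) ^ 2)
      (2 * ((t + τ) ^ s - t ^ s) * (s * (t + τ) ^ (s - 1))) τ := by
    have := (hasDerivAt_pow 2 ((t + τ) ^ s - t ^ s)).comp τ (hA.sub_const (t ^ s))
    exact this.congr_deriv (by norm_num)
  have hD : HasDerivAt (fun x : ℝ => 2 * s * t ^ s * x ^ (2 * s))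
      (2 * s * t ^ s * (2 * s * τ ^ (2 * s - 1))) τ :=
    (Real.hasDerivAt_rpow_const (p := 2 * s) (Or.inl hτ.ne')).const_mul _
  have hD0 : 2 * s * t ^ s * τ ^ (2 * s) ≠ 0 := by positivity
  have hdiv := hN.div hD hD0
  have heq : (2 * ((t + τ) ^ s - t ^ s) * (s * (t + τ) ^ (s - 1)) *
        (2 * s * t ^ s * τ ^ (2 * s)) -
      ((t + τ) ^ s - t ^ s) ^ 2 * (2 * s * t ^ s * (2 * s * τ ^ (2 * s - 1)))) /
        (2 * s * t ^ s * τ ^ (2 * s)) ^ 2 = f1 s t τ + fq s t τ := by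
    have e1 : (t + τ) ^ (s - 1) = (t + τ) ^ s / (t + τ) := by
      rw [Real.rpow_sub hP, Real.rpow_one]
    have e3 : τ ^ (2 * s) = τ ^ s * τ ^ s := by
      rw [show 2 * s = s + s by ring, Real.rpow_add hτ]
    have e4 : τ ^ (2 * s - 1) = τ ^ s * τ ^ s / τ := by
      rw [show 2 * s - 1 = s + s - 1 by ring, Real.rpow_sub hτ, Real.rpow_add hτ, Real.rpow_one]
    have e5 : τ ^ (1 + 2 * s) = τ * (τ ^ s * τ ^ s) := by
      rw [show 1 + 2 * s = 1 + (s + s) by ring, Real.rpow_add hτ, Real.rpow_one,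
        Real.rpow_add hτ]
    have e2 : (t + τ) ^ (2 * s - 1) = (t + τ) ^ s * (t + τ) ^ s / (t + τ) := by
      rw [show 2 * s - 1 = s + s - 1 by ring, Real.rpow_sub hP, Real.rpow_add hP, Real.rpow_one]
    have e6 : t ^ (1 - s) = t / t ^ s := by
      rw [Real.rpow_sub ht, Real.rpow_one]
    simp only [f1, fq]
    rw [e1, e2, e3, e4, e5, e6]
    have h1 : t + τ ≠ 0 := hP.ne'
    have h2 : τ ≠ 0 := hτ.ne'
    have h3 : t ^ s ≠ 0 := by positivity
    have h4 : τ ^ s ≠ 0 := by positivity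
    have h5 : s ≠ 0 := hs0.ne'
    field_simp
    ring
  rw [heq] at hdiv
  exact hdiv

lemma tendsto_Hh_atTop (hs : 1 / 2 < s) (ht : 0 < t) :
    Tendsto (Hh s t) atTop (𝓝 (t ^ (-s) / (2 * s))) := by
  have hs0 : (0:ℝ) < s := by linarith
  have key : (fun u : ℝ => ((1 + u) ^ s - u ^ s) ^ 2 / (2 * s * t ^ s)) ∘ (fun τ : ℝ => t / τ)
      =ᶠ[atTop] Hh s t := by
    filter_upwards [eventually_gt_atTop 0] with τ hτ
    have hP : 0 < t + τ := by linarith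
    simp only [Function.comp, Hh]
    rw [show 1 + t / τ = (t + τ) / τ by field_simp; ring,
      Real.div_rpow hP.le hτ.le, Real.div_rpow ht.le hτ.le,
      show τ ^ (2 * s) = τ ^ s * τ ^ s by
        rw [show 2 * s = s + s by ring, Real.rpow_add hτ]]
    rw [div_sub_div_same, div_pow, div_div]
    ring_nf
  have h0 : Tendsto (fun τ : ℝ => t / τ) atTop (𝓝 0) := by
    simpa using tendsto_inv_atTop_zero.const_mul t |>.congr (fun τ => by rw [div_eq_mul_inv])
  have h1 : ContinuousAt (fun u : ℝ => ((1 + u) ^ s - u ^ s) ^ 2 / (2 * s * t ^ s)) 0 := by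
    have c1 : ContinuousAt (fun u : ℝ => (1 + u) ^ s) 0 :=
      (continuousAt_const.add continuousAt_id).rpow_const (Or.inl (by norm_num))
    have c2 : ContinuousAt (fun u : ℝ => u ^ s) 0 :=
      continuousAt_id.rpow_const (Or.inr hs0.le)
    exact ((c1.sub c2).pow 2).div_const _
  have hval : ((1 + (0:ℝ)) ^ s - (0:ℝ) ^ s) ^ 2 / (2 * s * t ^ s) = t ^ (-s) / (2 * s) := by
    rw [add_zero, Real.one_rpow, Real.zero_rpow hs0.ne', Real.rpow_neg ht.le]
    have h3 : t ^ s ≠ 0 := by positivity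
    field_simp
    ring
  have := (h1.tendsto.comp h0)
  rw [hval] at this
  exact this.congr' key

lemma tendsto_Hh_zero (hs : 1 / 2 < s) (hs1 : s < 1) (ht : 0 < t) :
    Tendsto (fun ε : ℝ => Hh s t ε) (𝓝[>] (0:ℝ)) (𝓝 0) := by
  have hs0 : (0:ℝ) < s := by linarith
  have key : (fun ε : ℝ => 1 / (2 * s * t ^ s) * (((t + ε) ^ s - t ^ s) / ε) ^ 2 *
      ε ^ (2 - 2 * s)) =ᶠ[𝓝[>] (0:ℝ)] fun ε => Hh s t ε := by
    filter_upwards [self_mem_nhdsWithin] with ε (hε : ε ∈ Ioi (0:ℝ))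
    have hε' : (0:ℝ) < ε := hε
    simp only [Hh]
    rw [div_pow, show (2:ℝ) - 2 * s = ((2:ℕ):ℝ) + (-(2 * s)) by push_cast; ring,
      Real.rpow_add hε', Real.rpow_natCast, Real.rpow_neg hε'.le]
    have h1 : ε ^ (2*s) ≠ 0 := by positivity
    have h2 : t ^ s ≠ 0 := by positivity
    have h3 : (ε:ℝ) ≠ 0 := hε'.ne'
    field_simp
  have slope0 : Tendsto (fun ε : ℝ => ((t + ε) ^ s - t ^ s) / ε) (𝓝[>] (0:ℝ))
      (𝓝 (s * t ^ (s - 1))) := by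
    have hd : HasDerivAt (fun x : ℝ => x ^ s) (s * t ^ (s - 1)) t :=
      Real.hasDerivAt_rpow_const (Or.inl ht.ne')
    have hsl := hasDerivAt_iff_tendsto_slope.1 hd
    have hmap : Tendsto (fun ε : ℝ => t + ε) (𝓝[>] (0:ℝ)) (𝓝[≠] t) := by
      rw [tendsto_nhdsWithin_iff]
      constructor
      · have : Tendsto (fun ε : ℝ => t + ε) (𝓝 0) (𝓝 (t + 0)) :=
          (continuous_const.add continuous_id).tendsto 0
        rw [add_zero] at this
        exact this.mono_left nhdsWithin_le_nhds
      · filter_upwards [self_mem_nhdsWithin] with ε (hε : ε ∈ Ioi (0:ℝ))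
        have hε' : (0:ℝ) < ε := hε
        simp only [mem_compl_iff, mem_singleton_iff]
        exact ne_of_gt (by linarith)
    have := hsl.comp hmap
    refine this.congr fun ε => ?_
    simp only [Function.comp, slope_def_field]
    rw [add_sub_cancel_left]
  have h2 : Tendsto (fun ε : ℝ => ε ^ (2 - 2 * s)) (𝓝[>] (0:ℝ)) (𝓝 0) := by
    have hc := (Real.continuousAt_rpow_const 0 (2 - 2 * s) (Or.inr (by linarith))).tendsto
    rw [Real.zero_rpow (by linarith : (2:ℝ) - 2 * s ≠ 0)] at hc
    exact hc.mono_left nhdsWithin_le_nhds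
  have := ((slope0.pow 2).const_mul (1 / (2 * s * t ^ s))).mul h2
  rw [mul_zero] at this
  exact this.congr' key

lemma fq_bound (hs : 1 / 2 < s) (hs1 : s < 1) (ht : 0 < t) (hε : 0 < ε) (hτ : ε ≤ τ) :
    ‖fq s t τ‖ ≤ ε ^ (-(1 + s)) := by
  have hτ' : 0 < τ := lt_of_lt_of_le hε hτ
  have hP : 0 < t + τ := by linarith
  have hs0 : (0:ℝ) < s := by linarith
  have hBle : t ^ s ≤ (t + τ) ^ s := Real.rpow_le_rpow ht.le (by linarith) hs0.le
  have e2 : t ^ (1 - s) * t ^ s = t := by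
    rw [← Real.rpow_add ht, show 1 - s + s = (1:ℝ) by ring, Real.rpow_one]
  have hnum : t * (t + τ) ^ (s - 1) - t ^ (1 - s) * (t + τ) ^ (2 * s - 1)
      = -(t ^ (1 - s) * (t + τ) ^ (s - 1) * ((t + τ) ^ s - t ^ s)) := by
    have e1 : (t + τ) ^ (2 * s - 1) = (t + τ) ^ (s - 1) * (t + τ) ^ s := by
      rw [← Real.rpow_add hP]; ring_nf
    rw [e1]
    linear_combination (-((t + τ) ^ (s - 1))) * e2
  have hpos : 0 ≤ t ^ (1 - s) * (t + τ) ^ (s - 1) * ((t + τ) ^ s - t ^ s) :=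
    mul_nonneg (mul_nonneg (Real.rpow_nonneg ht.le _) (Real.rpow_nonneg hP.le _))
      (by linarith)
  have hden : (0:ℝ) < τ ^ (1 + 2 * s) := Real.rpow_pos_of_pos hτ' _
  simp only [fq]
  rw [hnum, Real.norm_eq_abs, abs_div, abs_neg, abs_of_nonneg hpos, abs_of_pos hden]
  have b1 : (t + τ) ^ (s - 1) ≤ t ^ (s - 1) :=
    Real.rpow_le_rpow_of_nonpos ht (by linarith) (by linarith)
  have b2 : (t + τ) ^ s - t ^ s ≤ τ ^ s := by
    have := rpow_subadd ht.le hτ'.le hs0.le hs1.le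
    linarith
  have e3 : t ^ (1 - s) * t ^ (s - 1) = 1 := by
    rw [← Real.rpow_add ht, show 1 - s + (s - 1) = (0:ℝ) by ring, Real.rpow_zero]
  have hnumle : t ^ (1 - s) * (t + τ) ^ (s - 1) * ((t + τ) ^ s - t ^ s) ≤ τ ^ s := by
    have h1 : t ^ (1 - s) * (t + τ) ^ (s - 1) ≤ t ^ (1 - s) * t ^ (s - 1) :=
      mul_le_mul_of_nonneg_left b1 (Real.rpow_nonneg ht.le _)
    calc t ^ (1 - s) * (t + τ) ^ (s - 1) * ((t + τ) ^ s - t ^ s)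
        ≤ t ^ (1 - s) * t ^ (s - 1) * τ ^ s := by
          apply mul_le_mul h1 b2 (by linarith) (by positivity)
      _ = τ ^ s := by rw [e3, one_mul]
  calc t ^ (1 - s) * (t + τ) ^ (s - 1) * ((t + τ) ^ s - t ^ s) / τ ^ (1 + 2 * s)
      ≤ τ ^ s / τ ^ (1 + 2 * s) := by gcongr
    _ = τ ^ (-(1 + s)) := by
        rw [show -(1 + s) = s - (1 + 2 * s) by ring, Real.rpow_sub hτ']
    _ ≤ ε ^ (-(1 + s)) := Real.rpow_le_rpow_of_nonpos hε hτ (by linarith)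

lemma phi_deriv (ht : 0 < t) (hτ : 0 < τ) :
    HasDerivAt (phi t) (t ^ 2 / (t + τ) ^ 2) τ := by
  have hP : 0 < t + τ := by linarith
  have h1 : HasDerivAt (fun x : ℝ => t * x) t τ := by
    simpa using (hasDerivAt_id τ).const_mul t
  have h2 : HasDerivAt (fun x : ℝ => t + x) 1 τ := (hasDerivAt_id τ).const_add t
  have := h1.div h2 hP.ne'
  refine this.congr_deriv ?_
  field_simp
  ring

lemma phi_strictMono (ht : 0 < t) {a b : ℝ} (ha : 0 < a) (hab : a < b) :
    phi t a < phi t b := by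
  have hb : 0 < b := ha.trans hab
  simp only [phi]
  rw [div_lt_div_iff₀ (by linarith) (by linarith)]
  nlinarith [mul_pos (mul_pos ht ht) (sub_pos.2 hab)]

lemma phi_image (ht : 0 < t) (hε : 0 < ε) (hεt : ε < t) :
    phi t '' Ioi (t * ε / (t - ε)) = Ioo ε t := by
  have htε : 0 < t - ε := by linarith
  have hε' : 0 < t * ε / (t - ε) := by positivity
  ext v
  simp only [mem_image, mem_Ioi, mem_Ioo]
  constructor
  · rintro ⟨u, hu, rfl⟩
    have hu0 : 0 < u := hε'.trans hu
    have hP : 0 < t + u := by linarith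
    rw [div_lt_iff₀ htε] at hu
    constructor
    · simp only [phi]
      rw [lt_div_iff₀ hP]
      nlinarith
    · simp only [phi]
      rw [div_lt_iff₀ hP]
      nlinarith
  · rintro ⟨hv1, hv2⟩
    have h1 : 0 < t - v := by linarith
    have hv0 : 0 < v := hε.trans hv1
    refine ⟨t * v / (t - v), ?_, ?_⟩
    · rw [div_lt_div_iff₀ htε h1]
      nlinarith [mul_pos (mul_pos ht ht) (sub_pos.2 hv1)]
    · have hden : t + t * v / (t - v) = t ^ 2 / (t - v) := by
        field_simp
        ring
      simp only [phi]
      rw [hden]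
      have h2 : t ≠ 0 := ht.ne'
      have h3 : t - v ≠ 0 := h1.ne'
      field_simp

lemma cov_pointwise (hs : 1 / 2 < s) (ht : 0 < t) (hτ : 0 < τ) :
    |t ^ 2 / (t + τ) ^ 2| • f2 s t (phi t τ) = fq s t τ := by
  have hP : 0 < t + τ := by linarith
  have hs0 : (0:ℝ) < s := by linarith
  rw [smul_eq_mul, abs_of_pos (by positivity)]
  simp only [f2, phi, fq]
  have h1 : t - t * τ / (t + τ) = t ^ 2 / (t + τ) := by field_simp; ring
  rw [h1]
  have ex : ∀ x : ℝ, 0 < x → x ^ (1 + 2 * s) = x * (x ^ s * x ^ s) := fun x hx => by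
    rw [show 1 + 2 * s = 1 + (s + s) by ring, Real.rpow_add hx, Real.rpow_one,
      Real.rpow_add hx]
  have e1 : (t ^ 2 / (t + τ)) ^ s = t ^ s * t ^ s / (t + τ) ^ s := by
    rw [Real.div_rpow (by positivity) hP.le, show (t:ℝ) ^ 2 = t * t by ring,
      Real.mul_rpow ht.le ht.le]
  have e2 : (t * τ / (t + τ)) ^ (1 + 2 * s)
      = t * (t ^ s * t ^ s) * (τ * (τ ^ s * τ ^ s)) / ((t + τ) * ((t + τ) ^ s * (t + τ) ^ s)) := by
    rw [Real.div_rpow (by positivity) hP.le, Real.mul_rpow ht.le hτ.le,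
      ex t ht, ex τ hτ, ex (t + τ) hP]
  have e3 : (t + τ) ^ (s - 1) = (t + τ) ^ s / (t + τ) := by
    rw [Real.rpow_sub hP, Real.rpow_one]
  have e4 : (t + τ) ^ (2 * s - 1) = (t + τ) ^ s * (t + τ) ^ s / (t + τ) := by
    rw [show 2 * s - 1 = s + s - 1 by ring, Real.rpow_sub hP, Real.rpow_add hP, Real.rpow_one]
  have e5 : t ^ (1 - s) = t / t ^ s := by rw [Real.rpow_sub ht, Real.rpow_one]
  have e6 : τ ^ (1 + 2 * s) = τ * (τ ^ s * τ ^ s) := ex τ hτ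
  rw [e1, e2, e3, e4, e5, e6]
  have h2 : (t + τ) ≠ 0 := hP.ne'
  have h3 : t ^ s ≠ 0 := by positivity
  have h4 : τ ^ s ≠ 0 := by positivity
  have h5 : (t + τ) ^ s ≠ 0 := by positivity
  have h6 : t ≠ 0 := ht.ne'
  have h7 : τ ≠ 0 := hτ.ne'
  field_simp

lemma integral_tail (hs : 1 / 2 < s) (ht : 0 < t) :
    ∫ u in Ioi t, -(t ^ s) * u ^ (-(1 + 2 * s)) = -(t ^ (-s) / (2 * s)) := by
  rw [MeasureTheory.integral_const_mul, integral_Ioi_rpow_of_lt (by linarith) ht]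
  have e : t ^ s * t ^ (-(2 * s)) = t ^ (-s) := by
    rw [← Real.rpow_add ht]; ring_nf
  rw [show -(1 + 2 * s) + 1 = -(2 * s) by ring]
  rw [neg_div_neg_eq, ← mul_div_assoc, neg_mul, e, neg_div]

lemma main_formula (hs : 1 / 2 < s) (hs1 : s < 1) (ht : 0 < t) (hε : 0 < ε)
    (hεt : ε < t / 2) :
    ∫ τ in {τ : ℝ | ε < |τ|}, Fi s t τ
      = -(Hh s t ε) - ∫ τ in Ioc ε (t * ε / (t - ε)), fq s t τ := by
  set ε' := t * ε / (t - ε) with hε'def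
  have htε : 0 < t - ε := by linarith
  have hε'0 : 0 < ε' := by positivity
  have hεε' : ε < ε' := by
    rw [hε'def, lt_div_iff₀ htε]
    nlinarith
  have hε't : ε' < t := by
    rw [hε'def, div_lt_iff₀ htε]
    nlinarith
  have hεt' : ε < t := by linarith
  have hs0 : (0:ℝ) < s := by linarith
  -- set splitting
  have hsetsplit : {τ : ℝ | ε < |τ|} = Iio (-ε) ∪ Ioi ε := by
    ext τ
    simp only [mem_setOf_eq, mem_union, mem_Iio, mem_Ioi, lt_abs]
    constructor
    · rintro (h | h)
      · exact Or.inr h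
      · exact Or.inl (by linarith)
    · rintro (h | h)
      · exact Or.inr (by linarith)
      · exact Or.inl h
  -- pointwise identifications
  have eq1 : EqOn (f1 s t) (Fi s t) (Ioi ε) := by
    intro τ hτ
    have hτ' : 0 < τ := hε.trans hτ
    simp only [f1, Fi]
    rw [if_pos (by linarith : (0:ℝ) ≤ t + τ), if_pos ht.le, abs_of_pos hτ']
  have eq2 : EqOn (fun u => Fi s t (-u)) (f2 s t) (Ioc ε t) := by
    intro u hu
    have hu0 : 0 < u := hε.trans hu.1
    simp only [Fi, f2]
    rw [if_pos (by linarith [hu.2] : (0:ℝ) ≤ t + -u), if_pos ht.le, abs_neg,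
      abs_of_pos hu0, show t + -u = t - u by ring]
  have eq3 : EqOn (fun u => Fi s t (-u)) (fun u => -(t ^ s) * u ^ (-(1 + 2 * s))) (Ioi t) := by
    intro u hu
    have hu0 : 0 < u := ht.trans hu
    simp only [Fi]
    rw [if_neg (by simp only [not_le]; linarith [mem_Ioi.1 hu] : ¬ (0:ℝ) ≤ t + -u),
      if_pos ht.le, abs_neg, abs_of_pos hu0, zero_sub, Real.rpow_neg hu0.le,
      div_eq_mul_inv, neg_mul]
  -- integrability
  have hIf1 : IntegrableOn (f1 s t) (Ioi ε) := integrableOn_f1 ht hs hε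
  have hIfq : IntegrableOn (fq s t) (Ioi ε) := integrableOn_fq ht hs hs1 hε
  have hIF_Ioi : IntegrableOn (Fi s t) (Ioi ε) := hIf1.congr_fun eq1 measurableSet_Ioi
  have hIF2 : IntegrableOn (fun u => Fi s t (-u)) (Ioc ε t) :=
    (integrableOn_f2 hs0.le hε).congr_fun eq2.symm measurableSet_Ioc
  have hIF3 : IntegrableOn (fun u => Fi s t (-u)) (Ioi t) :=
    IntegrableOn.congr_fun
      ((integrableOn_Ioi_rpow_of_lt (by linarith : -(1 + 2*s) < -1) ht).const_mul
        (-(t ^ s))) eq3.symm measurableSet_Ioi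
  have hIFneg : IntegrableOn (fun u => Fi s t (-u)) (Ioi ε) := by
    rw [← Ioc_union_Ioi_eq_Ioi hεt'.le]
    exact hIF2.union hIF3
  have hIF_Iio : IntegrableOn (Fi s t) (Iio (-ε)) := integrableOn_comp_neg hIFneg
  have hdisj : Disjoint (Iio (-ε)) (Ioi ε) := by
    apply Set.disjoint_left.mpr
    intro x hx hx'
    simp only [mem_Iio] at hx
    simp only [mem_Ioi] at hx'
    linarith
  have hdisj2 : Disjoint (Ioc ε t) (Ioi t) := by
    apply Set.disjoint_left.mpr
    intro x hx hx'
    simp only [mem_Ioc] at hx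
    simp only [mem_Ioi] at hx'
    linarith
  have hdisj3 : Disjoint (Ioc ε ε') (Ioi ε') := by
    apply Set.disjoint_left.mpr
    intro x hx hx'
    simp only [mem_Ioc] at hx
    simp only [mem_Ioi] at hx'
    linarith
  -- left-hand side split
  rw [hsetsplit, setIntegral_union hdisj measurableSet_Ioi hIF_Iio hIF_Ioi]
  -- negative side
  have hleft : ∫ τ in Iio (-ε), Fi s t τ
      = (∫ u in Ioc ε t, f2 s t u) + -(t ^ (-s) / (2 * s)) := by
    have h1 : ∫ τ in Iio (-ε), Fi s t τ = ∫ τ in Iic (-ε), Fi s t τ :=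
      setIntegral_congr_set Iio_ae_eq_Iic
    have h2 : ∫ u in Ioi ε, Fi s t (-u) = ∫ τ in Iic (-ε), Fi s t τ :=
      integral_comp_neg_Ioi ε (Fi s t)
    rw [h1, ← h2, ← Ioc_union_Ioi_eq_Ioi hεt'.le,
      setIntegral_union hdisj2 measurableSet_Ioi hIF2 hIF3,
      setIntegral_congr_fun measurableSet_Ioc eq2,
      setIntegral_congr_fun measurableSet_Ioi eq3, integral_tail hs ht]
  rw [hleft]
  -- change of variables
  have hcov : ∫ u in Ioc ε t, f2 s t u = ∫ τ in Ioi ε', fq s t τ := by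
    have h0 : ∫ u in Ioc ε t, f2 s t u = ∫ u in Ioo ε t, f2 s t u :=
      (setIntegral_congr_set Ioo_ae_eq_Ioc).symm
    rw [h0, ← phi_image ht hε hεt']
    rw [integral_image_eq_integral_abs_deriv_smul measurableSet_Ioi
      (fun x hx => (phi_deriv ht (hε'0.trans hx)).hasDerivWithinAt)
      (fun a ha b hb hab => ?inj) (f2 s t)]
    · exact setIntegral_congr_fun measurableSet_Ioi
        (fun τ hτ => cov_pointwise hs ht (hε'0.trans hτ))
    case inj =>
      by_contra hne
      rcases lt_or_gt_of_ne hne with h | h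
      · exact absurd hab (ne_of_lt (phi_strictMono ht (hε'0.trans ha) h))
      · exact absurd hab.symm (ne_of_lt (phi_strictMono ht (hε'0.trans hb) h))
  rw [hcov]
  -- FTC part
  have hFTC : ∫ τ in Ioi ε, (f1 s t τ + fq s t τ) = t ^ (-s) / (2 * s) - Hh s t ε :=
    integral_Ioi_of_hasDerivAt_of_tendsto
      ((hasDerivAt_Hh hs ht hε).continuousAt.continuousWithinAt)
      (fun x hx => hasDerivAt_Hh hs ht (hε.trans hx))
      (hIf1.add hIfq) (tendsto_Hh_atTop hs ht)
  have hadd : ∫ τ in Ioi ε, (f1 s t τ + fq s t τ)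
      = (∫ τ in Ioi ε, f1 s t τ) + ∫ τ in Ioi ε, fq s t τ :=
    integral_add hIf1 hIfq
  have hsplitq : ∫ τ in Ioi ε, fq s t τ
      = (∫ τ in Ioc ε ε', fq s t τ) + ∫ τ in Ioi ε', fq s t τ := by
    rw [← Ioc_union_Ioi_eq_Ioi hεε'.le,
      setIntegral_union hdisj3 measurableSet_Ioi
        (hIfq.mono_set Ioc_subset_Ioi_self)
        (hIfq.mono_set (Ioi_subset_Ioi hεε'.le))]
  have hIoiF : ∫ τ in Ioi ε, Fi s t τ = ∫ τ in Ioi ε, f1 s t τ :=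
    (setIntegral_congr_fun measurableSet_Ioi eq1).symm
  rw [hIoiF]
  linarith [hFTC, hadd, hsplitq]

lemma tendsto_R (hs : 1 / 2 < s) (hs1 : s < 1) (ht : 0 < t) :
    Tendsto (fun ε : ℝ => ∫ τ in Ioc ε (t * ε / (t - ε)), fq s t τ)
      (𝓝[>] (0:ℝ)) (𝓝 0) := by
  have hs0 : (0:ℝ) < s := by linarith
  apply squeeze_zero_norm'
  · filter_upwards [Ioo_mem_nhdsGT (half_pos ht)]
      with ε hε
    obtain ⟨hε0, hεt⟩ := hε
    set ε' := t * ε / (t - ε) with hε'def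
    have htε : 0 < t - ε := by linarith
    have hεε' : ε < ε' := by
      rw [hε'def, lt_div_iff₀ htε]
      nlinarith
    have hIfq : IntegrableOn (fq s t) (Ioc ε ε') :=
      (integrableOn_fq ht hs hs1 hε0).mono_set Ioc_subset_Ioi_self
    have hb : ‖∫ τ in Ioc ε ε', fq s t τ‖ ≤ ε ^ (-(1 + s)) * (volume (Ioc ε ε')).toReal :=
      norm_setIntegral_le_of_norm_le_const
        (by rw [Real.volume_Ioc]; exact ENNReal.ofReal_lt_top)
        (fun x hx => fq_bound hs hs1 ht hε0 hx.1.le)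
    have hvol : (volume (Ioc ε ε')).toReal = ε ^ 2 / (t - ε) := by
      rw [Real.volume_Ioc, ENNReal.toReal_ofReal (by linarith)]
      rw [hε'def]
      field_simp
      ring
    have hcombine : ε ^ (-(1 + s)) * (ε ^ 2 / (t - ε)) = ε ^ (1 - s) / (t - ε) := by
      rw [show (ε:ℝ) ^ 2 = ε ^ ((2:ℕ):ℝ) by rw [Real.rpow_natCast], ← mul_div_assoc,
        ← Real.rpow_add hε0]
      norm_num
      rw [show -s + -1 + (2:ℝ) = 1 - s by ring]
    calc ‖∫ τ in Ioc ε ε', fq s t τ‖ ≤ ε ^ (-(1 + s)) * (volume (Ioc ε ε')).toReal := hb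
      _ = ε ^ (1 - s) / (t - ε) := by rw [hvol, hcombine]
      _ ≤ ε ^ (1 - s) / (t / 2) := by
          apply div_le_div_of_nonneg_left (Real.rpow_nonneg hε0.le _) (half_pos ht)
          linarith
      _ = 2 / t * ε ^ (1 - s) := by
          rw [div_div_eq_mul_div]
          ring
  · have h1 : Tendsto (fun ε : ℝ => ε ^ (1 - s)) (𝓝[>] (0:ℝ)) (𝓝 0) := by
      have hc := (Real.continuousAt_rpow_const 0 (1 - s) (Or.inr (by linarith))).tendsto
      rw [Real.zero_rpow (by linarith : (1:ℝ) - s ≠ 0)] at hc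
      exact hc.mono_left nhdsWithin_le_nhds
    have := h1.const_mul (2 / t)
    rw [mul_zero] at this
    exact this

end Stmt4

/-- `g(η) = (η ∨ 0)^s` is `s`-fractional harmonic on the positive half-line,
in the principal value sense. -/
theorem stmt_4 (s : ℝ) (hs : 1 / 2 < s) (hs1 : s < 1) (t : ℝ) (ht : 0 < t) :
    Tendsto
      (fun ε : ℝ => ∫ τ in {τ : ℝ | ε < |τ|},
        ((fun η : ℝ => if 0 ≤ η then η ^ s else 0) (t + τ)
          - (fun η : ℝ => if 0 ≤ η then η ^ s else 0) t) / |τ| ^ (1 + 2 * s))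
      (nhdsWithin 0 (Set.Ioi (0 : ℝ))) (nhds 0) := by
  have h1 : Tendsto (fun ε : ℝ => -(Stmt4.Hh s t ε)
      - ∫ τ in Ioc ε (t * ε / (t - ε)), Stmt4.fq s t τ) (𝓝[>] (0:ℝ)) (𝓝 0) := by
    have := (Stmt4.tendsto_Hh_zero hs hs1 ht).neg.sub (Stmt4.tendsto_R hs hs1 ht)
    simpa using this
  refine Tendsto.congr' ?_ h1
  filter_upwards [Ioo_mem_nhdsGT (half_pos ht)]
    with ε hε
  exact (Stmt4.main_formula hs hs1 ht hε.1 hε.2).symm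
end
end

section
/- For each s ∈ (1/2, 1) there is a constant C_s, depending only on s, such that for every A > 0, r₀ > 0, x₀ ∈ ℝ^N, and every point x and unit vector v, the function P(x) = max(-A(|x-x₀|² - r₀²), 0) satisfies ∫₀^∞ (P(x+ηv) + P(x-ηv) - 2P(x))/η^{1+2s} dη ≥ -C_s A r₀^{2-2s}. -/
open MeasureTheory Metric Set Real

noncomputable section

/-- uniform lower bound `-C_s A r₀^{2-2s}` for the second-difference
integral of the cut paraboloid `P(x) = max(-A(|x-x₀|² - r₀²), 0)`, with `C_s`
depending only on `s`. -/
theorem stmt_5 (s : ℝ) (hs : 1 / 2 < s) (hs1 : s < 1) :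
    ∃ Cs : ℝ, 0 < Cs ∧
      ∀ (N : ℕ) (A r₀ : ℝ) (x₀ x v : EuclideanSpace ℝ (Fin N)),
        0 < A → 0 < r₀ → ‖v‖ = 1 →
        -Cs * A * r₀ ^ (2 - 2 * s) ≤
          ∫ η in Set.Ioi (0 : ℝ),
            ((fun z => max (-A * (‖z - x₀‖ ^ 2 - r₀ ^ 2)) 0) (x + η • v)
              + (fun z => max (-A * (‖z - x₀‖ ^ 2 - r₀ ^ 2)) 0) (x - η • v)
              - 2 * ((fun z => max (-A * (‖z - x₀‖ ^ 2 - r₀ ^ 2)) 0) x)) / η ^ (1 + 2 * s) := by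
  have hs0 : (0:ℝ) < s := by linarith
  have h1s : (0:ℝ) < 1 - s := by linarith
  refine ⟨1/(1-s) + 1/s, by positivity, ?_⟩
  intro N A r₀ x₀ x v hA hr hv
  have h1lt : (-1:ℝ) < 1 - 2*s := by linarith
  have h2lt : (-(1+2*s):ℝ) < -1 := by linarith
  set F : ℝ → ℝ := fun η =>
    (max (-A * (‖x + η • v - x₀‖ ^ 2 - r₀ ^ 2)) 0
      + max (-A * (‖x - η • v - x₀‖ ^ 2 - r₀ ^ 2)) 0
      - 2 * max (-A * (‖x - x₀‖ ^ 2 - r₀ ^ 2)) 0) / η ^ (1 + 2 * s) with hF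
  set g : ℝ → ℝ := fun η => 2*A*min (η^2) (r₀^2) / η^(1+2*s) with hgdef
  -- pointwise bound
  have hpt : ∀ η ∈ Ioi (0:ℝ), -g η ≤ F η := by
    intro η hη
    rw [mem_Ioi] at hη
    have hpow : (0:ℝ) < η ^ (1+2*s) := rpow_pos_of_pos hη _
    have hb : ‖η • v‖ = η := by
      rw [norm_smul, hv, mul_one, Real.norm_eq_abs, abs_of_pos hη]
    have key : ‖x + η • v - x₀‖ ^ 2 + ‖x - η • v - x₀‖ ^ 2
        = 2*‖x - x₀‖^2 + 2*η^2 := by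
      have hp := parallelogram_law_with_norm ℝ (x - x₀) (η • v)
      rw [hb] at hp
      have e1 : x + η • v - x₀ = (x - x₀) + η • v := by abel
      have e2 : x - η • v - x₀ = (x - x₀) - η • v := by abel
      rw [e1, e2]
      simp only [pow_two]
      linarith
    have hnum : -(2*A*min (η^2) (r₀^2)) ≤
        max (-A * (‖x + η • v - x₀‖ ^ 2 - r₀ ^ 2)) 0
          + max (-A * (‖x - η • v - x₀‖ ^ 2 - r₀ ^ 2)) 0
          - 2 * max (-A * (‖x - x₀‖ ^ 2 - r₀ ^ 2)) 0 := by
      have p1 := le_max_right (-A * (‖x + η • v - x₀‖ ^ 2 - r₀ ^ 2)) 0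
      have p2 := le_max_right (-A * (‖x - η • v - x₀‖ ^ 2 - r₀ ^ 2)) 0
      rcases le_or_gt (-A * (‖x - x₀‖ ^ 2 - r₀ ^ 2)) 0 with hQ | hQ
      · rw [max_eq_right hQ]
        have hmin : 0 ≤ min (η^2) (r₀^2) := le_min (sq_nonneg _) (sq_nonneg _)
        nlinarith
      · rw [max_eq_left hQ.le]
        rcases min_cases (η^2) (r₀^2) with ⟨hm, _⟩ | ⟨hm, _⟩
        · rw [hm]
          have q1 := le_max_left (-A * (‖x + η • v - x₀‖ ^ 2 - r₀ ^ 2)) 0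
          have q2 := le_max_left (-A * (‖x - η • v - x₀‖ ^ 2 - r₀ ^ 2)) 0
          nlinarith
        · rw [hm]
          have hx0 : (0:ℝ) ≤ ‖x - x₀‖ ^ 2 := sq_nonneg _
          nlinarith
    have : -g η = (-(2*A*min (η^2) (r₀^2)))/η^(1+2*s) := by
      rw [hgdef]; rw [neg_div]
    rw [hF, this]
    exact (div_le_div_iff_of_pos_right hpow).mpr hnum
  -- integrability of g on the two pieces
  have hg1 : IntegrableOn (fun η : ℝ => 2*A*η^(1-2*s)) (Ioc 0 r₀) := by
    exact ((intervalIntegral.intervalIntegrable_rpow' (a:=0) (b:=r₀) h1lt).1).const_mul (2*A)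
  have hEq1 : EqOn (fun η : ℝ => 2*A*η^(1-2*s)) g (Ioc 0 r₀) := by
    intro η hη
    have hη0 : (0:ℝ) < η := hη.1
    have hmin : min (η^2) (r₀^2) = η^2 :=
      min_eq_left (by nlinarith [hη.2] : η^2 ≤ r₀^2)
    simp only [hgdef, hmin]
    rw [← rpow_natCast η 2, mul_div_assoc, ← Real.rpow_sub hη0,
      show ((2:ℕ):ℝ) - (1+2*s) = 1-2*s by push_cast; ring]
  have hi1 : IntegrableOn g (Ioc 0 r₀) := hg1.congr_fun hEq1 measurableSet_Ioc
  have hg2 : IntegrableOn (fun η : ℝ => (2*A*r₀^2)*η^(-(1+2*s))) (Ioi r₀) :=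
    (integrableOn_Ioi_rpow_of_lt h2lt hr).const_mul (2*A*r₀^2)
  have hEq2 : EqOn (fun η : ℝ => (2*A*r₀^2)*η^(-(1+2*s))) g (Ioi r₀) := by
    intro η hη
    rw [mem_Ioi] at hη
    have hη0 : (0:ℝ) < η := hr.trans hη
    have hmin : min (η^2) (r₀^2) = r₀^2 :=
      min_eq_right (by nlinarith : r₀^2 ≤ η^2)
    simp only [hgdef, hmin]
    rw [Real.rpow_neg hη0.le, div_eq_mul_inv]
  have hi2 : IntegrableOn g (Ioi r₀) := hg2.congr_fun hEq2 measurableSet_Ioi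
  have hsplit : Ioc (0:ℝ) r₀ ∪ Ioi r₀ = Ioi 0 := Ioc_union_Ioi_eq_Ioi hr.le
  have hInt_g : IntegrableOn g (Ioi 0) := by
    rw [← hsplit]; exact hi1.union hi2
  -- value of the integral of g
  have I1 : ∫ η in Ioc (0:ℝ) r₀, g η = 2*A*(r₀^(2-2*s)/(2-2*s)) := by
    rw [← setIntegral_congr_fun measurableSet_Ioc hEq1,
      ← intervalIntegral.integral_of_le hr.le]
    rw [intervalIntegral.integral_const_mul, integral_rpow (Or.inl h1lt)]
    rw [show (1-2*s+1) = 2-2*s by ring,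
      Real.zero_rpow (by intro h; nlinarith : (2-2*s) ≠ 0), sub_zero]
  have I2 : ∫ η in Ioi r₀, g η = 2*A*r₀^2*(r₀^(-(2*s))/(2*s)) := by
    rw [← setIntegral_congr_fun measurableSet_Ioi hEq2]
    rw [MeasureTheory.integral_const_mul, integral_Ioi_rpow_of_lt h2lt hr]
    rw [show (-(1+2*s)+1) = -(2*s) by ring, neg_div_neg_eq]
  have key2 : (r₀:ℝ)^(2:ℕ) * r₀^(-(2*s)) = r₀^(2-2*s) := by
    rw [← rpow_natCast r₀ 2, ← Real.rpow_add hr,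
      show ((2:ℕ):ℝ) + -(2*s) = 2-2*s by push_cast; ring]
  have hIg : ∫ η in Ioi (0:ℝ), g η = (1/(1-s) + 1/s) * A * r₀^(2-2*s) := by
    rw [← hsplit, setIntegral_union (Ioc_disjoint_Ioi le_rfl) measurableSet_Ioi hi1 hi2,
      I1, I2, ← key2]
    have hs0' : s ≠ 0 := ne_of_gt hs0
    have h1s' : (1:ℝ) - s ≠ 0 := ne_of_gt h1s
    have h2s : (2:ℝ) - 2*s ≠ 0 := by intro h; apply h1s'; linarith
    field_simp
  -- conclude
  show -(1/(1-s) + 1/s) * A * r₀ ^ (2 - 2*s) ≤ ∫ η in Ioi (0:ℝ), F η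
  by_cases hf : IntegrableOn F (Ioi 0)
  · calc -(1/(1-s) + 1/s) * A * r₀ ^ (2 - 2*s)
        = ∫ η in Ioi (0:ℝ), -g η := by rw [integral_neg, hIg]; ring
      _ ≤ ∫ η in Ioi (0:ℝ), F η :=
        setIntegral_mono_on hInt_g.neg hf measurableSet_Ioi hpt
  · rw [MeasureTheory.integral_undef hf]
    have hp : (0:ℝ) < r₀ ^ (2-2*s) := rpow_pos_of_pos hr _
    have hc : (0:ℝ) < 1/(1-s) + 1/s := by positivity
    nlinarith [mul_pos (mul_pos hc hA) hp]
end
end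

section
/- Let s ∈ (1/2, 1). There exists ε₀ > 0 (depending only on s, a constant M > 0, and C_θ ∈ (0,1)) such that for all ε ∈ (0, ε₀) and all 0 < t < t' ≤ M/C_θ with ε^{-1/s} > 2M/C_θ, the quantity ∫_{t'}^{ε^{-1/s}-t} (1 - ε(t+η)^s)/η^{1+2s} dη - ∫_{ε^{-1/s}-t}^∞ (ε(t+η)^s - 1)/η^{1+2s} dη is bounded below by (1/(4s))(C_θ/M)^{2s} - ((2^{2s}+2^{2s-1})/s)ε², and hence is nonnegative. -/
open MeasureTheory Metric Set Real

noncomputable section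

lemma poly_aux (u v w b : ℝ) (hv0 : 0 ≤ v) (hvu : v ≤ u) (hw0 : 0 ≤ w)
    (hwb : w ≤ b) (hb0 : 0 ≤ b) (hub : 4 * b ≤ u) :
    v ^ 2 / 4 - 3 / 2 * b ^ 2 ≤ ((u ^ 2 - w ^ 2) / 2 - b * (u - w)) - b * w := by
  nlinarith [mul_le_mul hvu hvu hv0 (hv0.trans hvu), mul_le_mul hwb hwb hw0 hb0,
    mul_nonneg (hv0.trans hvu) (by linarith : (0:ℝ) ≤ u - 4 * b), sq_nonneg b]

lemma nn_aux (v b : ℝ) (hb0 : 0 ≤ b) (hb : 4 * b ≤ v) :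
    0 ≤ v ^ 2 / 4 - 3 / 2 * b ^ 2 := by
  nlinarith [mul_le_mul hb hb (by linarith : (0:ℝ) ≤ 4 * b) (by linarith : (0:ℝ) ≤ v)]

set_option maxHeartbeats 1000000 in
/-- for `ε` small (depending only on `s`, `M`, `C_θ`), the combined
gain/loss quantity is bounded below by `(1/(4s))(C_θ/M)^{2s} - ((2^{2s}+2^{2s-1})/s)ε²`
and hence is nonnegative. -/
theorem stmt_15 (s M Cθ : ℝ) (hs : 1 / 2 < s) (hs1 : s < 1) (hM : 0 < M)
    (hCθ0 : 0 < Cθ) (hCθ1 : Cθ < 1) :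
    ∃ ε₀ > (0 : ℝ), ∀ ε : ℝ, 0 < ε → ε < ε₀ → ∀ t t' : ℝ,
      0 < t → t < t' → t' ≤ M / Cθ → 2 * M / Cθ < ε ^ (-s⁻¹) →
      (1 / (4 * s)) * (Cθ / M) ^ (2 * s) - ((2 ^ (2 * s) + 2 ^ (2 * s - 1)) / s) * ε ^ 2
        ≤ (∫ η in Set.Ioc t' (ε ^ (-s⁻¹) - t), (1 - ε * (t + η) ^ s) / η ^ (1 + 2 * s))
          - (∫ η in Set.Ioi (ε ^ (-s⁻¹) - t), (ε * (t + η) ^ s - 1) / η ^ (1 + 2 * s)) ∧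
      0 ≤ (∫ η in Set.Ioc t' (ε ^ (-s⁻¹) - t), (1 - ε * (t + η) ^ s) / η ^ (1 + 2 * s))
          - (∫ η in Set.Ioi (ε ^ (-s⁻¹) - t), (ε * (t + η) ^ s - 1) / η ^ (1 + 2 * s)) := by
  have hs0 : (0 : ℝ) < s := by linarith
  have hMC : (0 : ℝ) < M / Cθ := by positivity
  set v : ℝ := (Cθ / M) ^ s with hv_def
  have hv0 : 0 < v := rpow_pos_of_pos (by positivity) s
  set P : ℝ := (2 : ℝ) ^ s with hP_def
  have hP0 : 0 < P := rpow_pos_of_pos (by norm_num) s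
  refine ⟨v / (4 * P), by positivity, ?_⟩
  intro ε hε hεlt t t' ht htt' ht'M hRbig
  set R : ℝ := ε ^ (-s⁻¹) with hRdef
  have ht'0 : 0 < t' := ht.trans htt'
  have htMC : t < M / Cθ := lt_of_lt_of_le htt' ht'M
  have hR2 : M / Cθ < R / 2 := by
    have : 2 * (M / Cθ) < R := by rw [← mul_div_assoc]; exact hRbig
    linarith
  have hRpos : 0 < R := by linarith
  have hhalf : R / 2 < R - t := by linarith
  have hRt0 : (0 : ℝ) < R - t := by linarith
  have ht'Rt : t' < R - t := by
    have := ht'M; linarith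
  -- rpow facts
  have hRs : R ^ (-s) = ε := by
    rw [hRdef, ← Real.rpow_mul hε.le, show -s⁻¹ * -s = 1 by field_simp, Real.rpow_one]
  set u : ℝ := t' ^ (-s) with hu_def
  set w : ℝ := (R - t) ^ (-s) with hw_def
  have hu0 : 0 < u := rpow_pos_of_pos ht'0 _
  have hw0 : 0 < w := rpow_pos_of_pos hRt0 _
  have hvu : v ≤ u := by
    have h1 : (M / Cθ) ^ (-s) ≤ u :=
      rpow_le_rpow_of_nonpos ht'0 ht'M (neg_nonpos.mpr hs0.le)
    have h2 : (M / Cθ) ^ (-s) = v := by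
      rw [Real.rpow_neg hMC.le, ← Real.inv_rpow hMC.le, inv_div]
    linarith [h2 ▸ h1]
  have hwb : w ≤ P * ε := by
    have h3 : w ≤ (R / 2) ^ (-s) :=
      rpow_le_rpow_of_nonpos (by positivity) hhalf.le (neg_nonpos.mpr hs0.le)
    have h4 : (R / 2) ^ (-s) = P * ε := by
      rw [Real.div_rpow hRpos.le (by norm_num), hRs,
        Real.rpow_neg (by norm_num : (0:ℝ) ≤ 2), hP_def]
      field_simp
    linarith [h4 ▸ h3]
  have hb : P * ε < v / 4 := by
    have h5 : P * ε < P * (v / (4 * P)) := by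
      exact mul_lt_mul_of_pos_left hεlt hP0
    have h6 : P * (v / (4 * P)) = v / 4 := by field_simp
    linarith [h6 ▸ h5]
  -- squares
  have hu2 : t' ^ (-(2 * s)) = u ^ 2 := by
    rw [show -(2 * s) = -s * 2 by ring, Real.rpow_mul ht'0.le, Real.rpow_two]
  have hw2 : (R - t) ^ (-(2 * s)) = w ^ 2 := by
    rw [show -(2 * s) = -s * 2 by ring, Real.rpow_mul hRt0.le, Real.rpow_two]
  have hv2 : (Cθ / M) ^ (2 * s) = v ^ 2 := by
    rw [show 2 * s = s * 2 by ring, Real.rpow_mul (by positivity), Real.rpow_two]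
  have hP2 : (2 : ℝ) ^ (2 * s) = P ^ 2 := by
    rw [show 2 * s = s * 2 by ring, Real.rpow_mul (by norm_num), Real.rpow_two]
  have hP21 : (2 : ℝ) ^ (2 * s - 1) = P ^ 2 / 2 := by
    rw [Real.rpow_sub (by norm_num), Real.rpow_one, hP2]
  -- integrability on Ioc
  have hIoc1 : IntegrableOn (fun η : ℝ => η ^ (-(1 + 2 * s))) (Ioc t' (R - t)) volume :=
    (integrableOn_Ioi_rpow_of_lt (by linarith) ht'0).mono_set Ioc_subset_Ioi_self
  have hIoc2 : IntegrableOn (fun η : ℝ => η ^ (-(1 + s))) (Ioc t' (R - t)) volume :=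
    (integrableOn_Ioi_rpow_of_lt (by linarith) ht'0).mono_set Ioc_subset_Ioi_self
  have hne1 : -(1 + 2 * s) ≠ -1 := by
    intro h
    have hsz : s = 0 := by linarith
    exact hs0.ne' hsz
  have hne2 : -(1 + s) ≠ -1 := by
    intro h
    have hsz : s = 0 := by linarith
    exact hs0.ne' hsz
  have hmem : (0 : ℝ) ∉ Set.uIcc t' (R - t) := Set.notMem_uIcc_of_lt ht'0 hRt0
  have hA : ∫ η in Ioc t' (R - t), η ^ (-(1 + 2 * s)) = (u ^ 2 - w ^ 2) / (2 * s) := by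
    rw [← intervalIntegral.integral_of_le ht'Rt.le, integral_rpow (Or.inr ⟨hne1, hmem⟩),
      show -(1 + 2 * s) + 1 = -(2 * s) by ring, hu2, hw2]
    field_simp [hs0.ne']
    ring
  have hC : ∫ η in Ioc t' (R - t), η ^ (-(1 + s)) = (u - w) / s := by
    rw [← intervalIntegral.integral_of_le ht'Rt.le, integral_rpow (Or.inr ⟨hne2, hmem⟩),
      show -(1 + s) + 1 = -s by ring, ← hu_def, ← hw_def]
    field_simp [hs0.ne']
    ring
  -- the integrand of I₁ is integrable on Ioc
  have hcont1 : ContinuousOn (fun η : ℝ => (1 - ε * (t + η) ^ s) / η ^ (1 + 2 * s))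
      (Icc t' (R - t)) := by
    apply ContinuousOn.div
    · exact (continuous_const.sub (continuous_const.mul
        ((continuous_const.add continuous_id).rpow_const
          (fun x => Or.inr hs0.le)))).continuousOn
    · exact (continuous_id.rpow_const (fun x => Or.inr (by positivity))).continuousOn
    · intro x hx
      exact (Real.rpow_pos_of_pos (lt_of_lt_of_le ht'0 hx.1) _).ne'
  have hg_int : IntegrableOn (fun η : ℝ => (1 - ε * (t + η) ^ s) / η ^ (1 + 2 * s))
      (Ioc t' (R - t)) volume :=
    (hcont1.integrableOn_Icc).mono_set Ioc_subset_Icc_self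
  have hflow_int : IntegrableOn
      (fun η : ℝ => η ^ (-(1 + 2 * s)) - P * ε * η ^ (-(1 + s))) (Ioc t' (R - t)) volume :=
    hIoc1.sub (hIoc2.const_mul _)
  -- pointwise comparison on Ioc
  have hpt1 : ∀ η ∈ Ioc t' (R - t),
      η ^ (-(1 + 2 * s)) - P * ε * η ^ (-(1 + s))
        ≤ (1 - ε * (t + η) ^ s) / η ^ (1 + 2 * s) := by
    intro η hη
    have hη0 : 0 < η := ht'0.trans hη.1
    have hden : 0 < η ^ (1 + 2 * s) := Real.rpow_pos_of_pos hη0 _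
    have hts : (t + η) ^ s ≤ P * η ^ s := by
      calc (t + η) ^ s ≤ (2 * η) ^ s := by
            apply Real.rpow_le_rpow (by linarith) (by linarith [hη.1]) hs0.le
        _ = P * η ^ s := Real.mul_rpow (by norm_num) hη0.le
    have e1 : η ^ (-(1 + 2 * s)) = 1 / η ^ (1 + 2 * s) := by
      rw [Real.rpow_neg hη0.le, one_div]
    have e2 : η ^ (-(1 + s)) = η ^ s / η ^ (1 + 2 * s) := by
      rw [show -(1 + s) = s - (1 + 2 * s) by ring, Real.rpow_sub hη0]
    rw [e1, e2, show 1 / η ^ (1 + 2 * s) - P * ε * (η ^ s / η ^ (1 + 2 * s))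
      = (1 - P * ε * η ^ s) / η ^ (1 + 2 * s) by ring]
    refine (div_le_div_iff_of_pos_right hden).mpr ?_
    have h11 : ε * ((t + η) ^ s) ≤ ε * (P * η ^ s) := mul_le_mul_of_nonneg_left hts hε.le
    have h12 : ε * (P * η ^ s) = P * ε * η ^ s := by ring
    linarith [h12 ▸ h11]
  have hI1 : (u ^ 2 - w ^ 2) / (2 * s) - P * ε * ((u - w) / s)
      ≤ ∫ η in Ioc t' (R - t), (1 - ε * (t + η) ^ s) / η ^ (1 + 2 * s) := by
    have h7 := setIntegral_mono_on hflow_int hg_int measurableSet_Ioc hpt1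
    have h8 : ∫ η in Ioc t' (R - t), (η ^ (-(1 + 2 * s)) - P * ε * η ^ (-(1 + s)))
        = (u ^ 2 - w ^ 2) / (2 * s) - P * ε * ((u - w) / s) := by
      rw [integral_sub hIoc1 (hIoc2.const_mul _), integral_const_mul, hA, hC]
    linarith [h8 ▸ h7]
  -- the I₂ bound
  have hIoi1 : IntegrableOn (fun η : ℝ => η ^ (-(1 + 2 * s))) (Ioi (R - t)) volume :=
    integrableOn_Ioi_rpow_of_lt (by linarith) hRt0
  have hIoi2 : IntegrableOn (fun η : ℝ => η ^ (-(1 + s))) (Ioi (R - t)) volume :=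
    integrableOn_Ioi_rpow_of_lt (by linarith) hRt0
  have hmaj_int : IntegrableOn (fun η : ℝ => P * ε * η ^ (-(1 + s))) (Ioi (R - t)) volume :=
    hIoi2.const_mul _
  have hcont2 : ContinuousOn (fun η : ℝ => (ε * (t + η) ^ s - 1) / η ^ (1 + 2 * s))
      (Ioi (R - t)) := by
    apply ContinuousOn.div
    · exact ((continuous_const.mul ((continuous_const.add continuous_id).rpow_const
        (fun x => Or.inr hs0.le))).sub continuous_const).continuousOn
    · exact (continuous_id.rpow_const (fun x => Or.inr (by positivity))).continuousOn
    · intro x hx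
      exact (Real.rpow_pos_of_pos (hRt0.trans hx) _).ne'
  have hf2_int : IntegrableOn (fun η : ℝ => (ε * (t + η) ^ s - 1) / η ^ (1 + 2 * s))
      (Ioi (R - t)) volume := by
    apply Integrable.mono (hIoi1.add hmaj_int)
      (hcont2.aestronglyMeasurable measurableSet_Ioi)
    filter_upwards [ae_restrict_mem measurableSet_Ioi] with η hη
    have hη' : R - t < η := Set.mem_Ioi.mp hη
    have hη0 : 0 < η := hRt0.trans hη'
    have hden : 0 < η ^ (1 + 2 * s) := Real.rpow_pos_of_pos hη0 _
    have hts : (t + η) ^ s ≤ P * η ^ s := by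
      calc (t + η) ^ s ≤ (2 * η) ^ s := by
            apply Real.rpow_le_rpow (by linarith) (by linarith) hs0.le
        _ = P * η ^ s := Real.mul_rpow (by norm_num) hη0.le
    have e1 : η ^ (-(1 + 2 * s)) = 1 / η ^ (1 + 2 * s) := by
      rw [Real.rpow_neg hη0.le, one_div]
    have e2 : η ^ (-(1 + s)) = η ^ s / η ^ (1 + 2 * s) := by
      rw [show -(1 + s) = s - (1 + 2 * s) by ring, Real.rpow_sub hη0]
    show ‖(ε * (t + η) ^ s - 1) / η ^ (1 + 2 * s)‖
      ≤ ‖η ^ (-(1 + 2 * s)) + P * ε * η ^ (-(1 + s))‖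
    rw [Real.norm_eq_abs, Real.norm_eq_abs, abs_div, abs_of_pos hden]
    have hb1 : |ε * (t + η) ^ s - 1| ≤ 1 + P * ε * η ^ s := by
      have h11 : ε * ((t + η) ^ s) ≤ ε * (P * η ^ s) := mul_le_mul_of_nonneg_left hts hε.le
      have h13 : 0 ≤ ε * (t + η) ^ s :=
        mul_nonneg hε.le (Real.rpow_nonneg (by linarith : (0:ℝ) ≤ t + η) s)
      have h14 : 0 ≤ P * ε * η ^ s :=
        mul_nonneg (mul_nonneg hP0.le hε.le) (Real.rpow_nonneg hη0.le s)
      rw [abs_sub_le_iff]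
      exact ⟨by linarith, by linarith⟩
    have hrhs : η ^ (-(1 + 2 * s)) + P * ε * η ^ (-(1 + s))
        = (1 + P * ε * η ^ s) / η ^ (1 + 2 * s) := by
      rw [e1, e2]; ring
    have hrhs_nonneg : 0 ≤ η ^ (-(1 + 2 * s)) + P * ε * η ^ (-(1 + s)) := by
      have := Real.rpow_nonneg hη0.le (-(1 + 2 * s))
      have := Real.rpow_nonneg hη0.le (-(1 + s))
      positivity
    rw [abs_of_nonneg hrhs_nonneg, hrhs]
    exact (div_le_div_iff_of_pos_right hden).mpr hb1
  have hpt2 : ∀ η ∈ Ioi (R - t),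
      (ε * (t + η) ^ s - 1) / η ^ (1 + 2 * s) ≤ P * ε * η ^ (-(1 + s)) := by
    intro η hη
    have hη' : R - t < η := Set.mem_Ioi.mp hη
    have hη0 : 0 < η := hRt0.trans hη'
    have hden : 0 < η ^ (1 + 2 * s) := Real.rpow_pos_of_pos hη0 _
    have hts : (t + η) ^ s ≤ P * η ^ s := by
      calc (t + η) ^ s ≤ (2 * η) ^ s := by
            apply Real.rpow_le_rpow (by linarith) (by linarith) hs0.le
        _ = P * η ^ s := Real.mul_rpow (by norm_num) hη0.le
    have e2 : η ^ (-(1 + s)) = η ^ s / η ^ (1 + 2 * s) := by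
      rw [show -(1 + s) = s - (1 + 2 * s) by ring, Real.rpow_sub hη0]
    rw [e2, show P * ε * (η ^ s / η ^ (1 + 2 * s)) = (P * ε * η ^ s) / η ^ (1 + 2 * s) by ring]
    refine (div_le_div_iff_of_pos_right hden).mpr ?_
    have h11 : ε * ((t + η) ^ s) ≤ ε * (P * η ^ s) := mul_le_mul_of_nonneg_left hts hε.le
    have h12 : ε * (P * η ^ s) = P * ε * η ^ s := by ring
    linarith [h12 ▸ h11]
  have hI2 : (∫ η in Ioi (R - t), (ε * (t + η) ^ s - 1) / η ^ (1 + 2 * s))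
      ≤ P * ε * (w / s) := by
    have h9 := setIntegral_mono_on hf2_int hmaj_int measurableSet_Ioi hpt2
    have h10 : ∫ η in Ioi (R - t), P * ε * η ^ (-(1 + s)) = P * ε * (w / s) := by
      rw [integral_const_mul, integral_Ioi_rpow_of_lt (by linarith) hRt0,
        show -(1 + s) + 1 = -s by ring, ← hw_def, neg_div_neg_eq]
    linarith [h10 ▸ h9]
  -- final arithmetic
  have hub : 4 * (P * ε) ≤ u := by linarith
  have hbε0 : 0 ≤ P * ε := by positivity
  have poly : v ^ 2 / 4 - (P ^ 2 + P ^ 2 / 2) * ε ^ 2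
      ≤ ((u ^ 2 - w ^ 2) / 2 - P * ε * (u - w)) - P * ε * w := by
    have := poly_aux u v w (P * ε) hv0.le hvu hw0.le hwb hbε0 hub
    have he : (P ^ 2 + P ^ 2 / 2) * ε ^ 2 = 3 / 2 * (P * ε) ^ 2 := by ring
    linarith [he ▸ this]
  have key : (1 / (4 * s)) * (Cθ / M) ^ (2 * s)
        - ((2 ^ (2 * s) + 2 ^ (2 * s - 1)) / s) * ε ^ 2
      ≤ ((u ^ 2 - w ^ 2) / (2 * s) - P * ε * ((u - w) / s)) - P * ε * (w / s) := by
    rw [hv2, hP2, hP21]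
    calc (1 / (4 * s)) * v ^ 2 - ((P ^ 2 + P ^ 2 / 2) / s) * ε ^ 2
        = (v ^ 2 / 4 - (P ^ 2 + P ^ 2 / 2) * ε ^ 2) / s := by ring
      _ ≤ (((u ^ 2 - w ^ 2) / 2 - P * ε * (u - w)) - P * ε * w) / s :=
          (div_le_div_iff_of_pos_right hs0).mpr poly
      _ = ((u ^ 2 - w ^ 2) / (2 * s) - P * ε * ((u - w) / s)) - P * ε * (w / s) := by ring
  have hmain : (1 / (4 * s)) * (Cθ / M) ^ (2 * s)
        - ((2 ^ (2 * s) + 2 ^ (2 * s - 1)) / s) * ε ^ 2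
      ≤ (∫ η in Ioc t' (R - t), (1 - ε * (t + η) ^ s) / η ^ (1 + 2 * s))
        - ∫ η in Ioi (R - t), (ε * (t + η) ^ s - 1) / η ^ (1 + 2 * s) := by
    linarith
  refine ⟨hmain, le_trans ?_ hmain⟩
  rw [hv2, hP2, hP21]
  have hnn : 0 ≤ v ^ 2 / 4 - (P ^ 2 + P ^ 2 / 2) * ε ^ 2 := by
    have := nn_aux v (P * ε) hbε0 (by linarith)
    have he : (P ^ 2 + P ^ 2 / 2) * ε ^ 2 = 3 / 2 * (P * ε) ^ 2 := by ring
    linarith [he ▸ this]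
  calc (0:ℝ) ≤ (v ^ 2 / 4 - (P ^ 2 + P ^ 2 / 2) * ε ^ 2) / s := div_nonneg hnn hs0.le
    _ = (1 / (4 * s)) * v ^ 2 - ((P ^ 2 + P ^ 2 / 2) / s) * ε ^ 2 := by ring
end
end

section
/- Let θ ∈ (0, π/2) and C⁺ = {x ∈ ℝ^N \ {0} : cos θ < x·e₁/|x| ≤ 1}, C⁻ = -C⁺. There exists A_θ ≥ 1, depending only on θ, such that for every x, z ∈ ℝ^N there is w ∈ ℝ^N with x - w ∈ C⁺ ∪ {0}, z - w ∈ C⁺ ∪ {0}, and |x - w| + |z - w| ≤ A_θ |x - z|. -/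
open MeasureTheory Metric Set Real

noncomputable section

lemma cone_aux {E : Type*} [NormedAddCommGroup E] [InnerProductSpace ℝ E]
    (e : E) (he : ‖e‖ = 1) (c t d : ℝ) (hd : 0 < d) (p : E) (hp : ‖p‖ ≤ d / 2)
    (hc0 : 0 ≤ c) (hc1 : c < 1) (ht : c * (t + 1/2) < t - 1/2) :
    p + (t * d) • e ≠ 0 ∧ c < (inner ℝ (p + (t * d) • e) e : ℝ) / ‖p + (t * d) • e‖ ∧
      ‖p + (t * d) • e‖ ≤ (t + 1/2) * d := by
  set v := p + (t * d) • e with hv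
  have ht2 : (1:ℝ)/2 < t := by nlinarith
  have hinner : (inner ℝ v e : ℝ) = inner ℝ p e + t * d := by
    rw [hv, inner_add_left, real_inner_smul_left, real_inner_self_eq_norm_sq, he]
    ring
  have hpe : |(inner ℝ p e : ℝ)| ≤ d / 2 := by
    calc |(inner ℝ p e : ℝ)| ≤ ‖p‖ * ‖e‖ := abs_real_inner_le_norm p e
    _ ≤ d / 2 := by rw [he]; simpa using hp
  have hlow : (t - 1/2) * d ≤ (inner ℝ v e : ℝ) := by
    rw [hinner]
    have := abs_le.1 hpe
    nlinarith [this.1]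
  have hinpos : 0 < (inner ℝ v e : ℝ) := lt_of_lt_of_le (by nlinarith) hlow
  have hnlow : (inner ℝ v e : ℝ) ≤ ‖v‖ := by
    calc (inner ℝ v e : ℝ) ≤ ‖v‖ * ‖e‖ := real_inner_le_norm v e
    _ = ‖v‖ := by rw [he, mul_one]
  have hnpos : 0 < ‖v‖ := lt_of_lt_of_le hinpos hnlow
  have hvne : v ≠ 0 := by
    intro h; rw [h, norm_zero] at hnpos; exact lt_irrefl 0 hnpos
  have hnup : ‖v‖ ≤ (t + 1/2) * d := by
    calc ‖v‖ ≤ ‖p‖ + ‖(t * d) • e‖ := norm_add_le _ _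
    _ = ‖p‖ + |t * d| * 1 := by rw [norm_smul, he]; rfl
    _ ≤ d / 2 + t * d := by
        rw [abs_of_nonneg (by nlinarith : (0:ℝ) ≤ t * d)]
        nlinarith
    _ = (t + 1/2) * d := by ring
  refine ⟨hvne, ?_, hnup⟩
  rw [lt_div_iff₀ hnpos]
  calc c * ‖v‖ ≤ c * ((t + 1/2) * d) := by
        apply mul_le_mul_of_nonneg_left hnup hc0
    _ < (t - 1/2) * d := by nlinarith
    _ ≤ (inner ℝ v e : ℝ) := hlow

/-- any two points `x, z` admit a common cone-apex `w` with
`x - w, z - w ∈ C⁺ ∪ {0}` and `|x-w| + |z-w| ≤ A_θ |x-z|`, where `A_θ ≥ 1`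
depends only on the cone opening `θ`. -/
theorem stmt_17 {N : ℕ} (hN : 0 < N) (θ : ℝ) (hθ0 : 0 < θ) (hθ : θ < π / 2) :
    ∃ Aθ : ℝ, 1 ≤ Aθ ∧
      ∀ x z : EuclideanSpace ℝ (Fin N), ∃ w : EuclideanSpace ℝ (Fin N),
        (x - w = 0 ∨ (x - w ≠ 0 ∧ Real.cos θ <
          (inner ℝ (x - w) (EuclideanSpace.single (⟨0, hN⟩ : Fin N) (1 : ℝ)) : ℝ) / ‖x - w‖)) ∧
        (z - w = 0 ∨ (z - w ≠ 0 ∧ Real.cos θ <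
          (inner ℝ (z - w) (EuclideanSpace.single (⟨0, hN⟩ : Fin N) (1 : ℝ)) : ℝ) / ‖z - w‖)) ∧
        ‖x - w‖ + ‖z - w‖ ≤ Aθ * ‖x - z‖ := by
  set c := Real.cos θ with hc
  have hc0 : 0 < c := Real.cos_pos_of_mem_Ioo ⟨by linarith [Real.pi_pos], hθ⟩
  have hc1 : c < 1 := by
    have h := Real.cos_lt_cos_of_nonneg_of_le_pi le_rfl
      (by linarith [Real.pi_pos] : θ ≤ π) hθ0
    simpa [hc] using h
  set t : ℝ := (1 + c) / (2 * (1 - c)) + 1 with htdef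
  have h1c : 0 < 1 - c := by linarith
  have htineq : c * (t + 1/2) < t - 1/2 := by
    have hmul : (1 + c) / (2 * (1 - c)) * (2 * (1 - c)) = 1 + c :=
      div_mul_cancel₀ _ (by positivity)
    rw [htdef]
    nlinarith [hmul]
  have ht2 : (1:ℝ)/2 < t := by nlinarith
  clear_value t
  clear_value c
  refine ⟨2 * t + 1, by nlinarith [ht2], fun x z => ?_⟩
  set e : EuclideanSpace ℝ (Fin N) := EuclideanSpace.single (⟨0, hN⟩ : Fin N) (1 : ℝ) with hedef
  have he : ‖e‖ = 1 := by rw [hedef, EuclideanSpace.norm_single]; norm_num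
  by_cases hxz : x = z
  · refine ⟨x, Or.inl (by simp), Or.inl (by rw [hxz]; simp), ?_⟩
    rw [hxz]; simp
  · set d : ℝ := ‖x - z‖ with hddef
    have hd : 0 < d := norm_pos_iff.2 (sub_ne_zero.2 hxz)
    have hxw : x - ((1/2 : ℝ) • (x + z) - (t * d) • e)
        = (1/2 : ℝ) • (x - z) + (t * d) • e := by module
    have hzw : z - ((1/2 : ℝ) • (x + z) - (t * d) • e)
        = (1/2 : ℝ) • (z - x) + (t * d) • e := by module
    have hpx : ‖(1/2 : ℝ) • (x - z)‖ ≤ d / 2 := by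
      rw [norm_smul, Real.norm_eq_abs, abs_of_nonneg (by norm_num : (0:ℝ) ≤ 1/2)]
      linarith [hddef.le, hddef.ge]
    have hpz : ‖(1/2 : ℝ) • (z - x)‖ ≤ d / 2 := by
      rw [norm_smul, norm_sub_rev, Real.norm_eq_abs,
        abs_of_nonneg (by norm_num : (0:ℝ) ≤ 1/2)]
      linarith [hddef.le, hddef.ge]
    have HX := cone_aux e he c t d hd _ hpx (le_of_lt hc0) hc1 htineq
    have HZ := cone_aux e he c t d hd _ hpz (le_of_lt hc0) hc1 htineq
    refine ⟨(1/2 : ℝ) • (x + z) - (t * d) • e, ?_, ?_, ?_⟩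
    · exact Or.inr ⟨by rw [hxw]; exact HX.1, by rw [hxw]; exact HX.2.1⟩
    · exact Or.inr ⟨by rw [hzw]; exact HZ.1, by rw [hzw]; exact HZ.2.1⟩
    · rw [hxw, hzw]
      calc ‖(1/2 : ℝ) • (x - z) + (t * d) • e‖ + ‖(1/2 : ℝ) • (z - x) + (t * d) • e‖
          ≤ (t + 1/2) * d + (t + 1/2) * d := add_le_add HX.2.2 HZ.2.2
        _ = (2 * t + 1) * d := by ring
end
end
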